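/- arXiv:1805.06295 — 4 statements merged into one kernel-verified Lean document; each statement's English description precedes it below -/
import Mathlib

section
/- Let Z_1,...,Z_N be i.i.d. standard normal random variables and let η_1,...,η_N ≥ 0 be constants, not all zero. Define X = Σ_{i=1}^N η_i (Z_i² − 1). Then for every x > 0, P(X ≥ 2‖η‖₂√x + 2‖η‖_∞ x) ≤ exp(−x). -/
open MeasureTheory ProbabilityTheory Real
open scoped NNReal ENNReal

lemma lm_log {y : ℝ} (hy : 0 ≤ y) (hy1 : y < 1) :
    -Real.log (1 - y) ≤ y + y^2 / (2*(1-y)) := by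
  set f : ℝ → ℝ := fun s => s + s^2/(2*(1-s)) + Real.log (1-s) with hf
  have hd : ∀ s : ℝ, s < 1 → HasDerivAt f
      (1 + (2*s*(2*(1-s)) - s^2*(-2))/(2*(1-s))^2 + (-1)/(1-s)) s := by
    intro s hs
    have hne : (1:ℝ) - s ≠ 0 := by linarith
    have hne2 : 2*((1:ℝ)-s) ≠ 0 := by
      intro h; apply hne; linarith [mul_eq_zero.mp h]
    have h2 : HasDerivAt (fun s : ℝ => s^2) (2*s) s := by
      simpa using hasDerivAt_pow 2 s
    have h3 : HasDerivAt (fun s : ℝ => 2*(1-s)) (-2) s := by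
      have := ((hasDerivAt_id s).const_sub 1).const_mul (2:ℝ)
      simpa using this
    have h4 := h2.div h3 hne2
    have h5 : HasDerivAt (fun s : ℝ => 1 - s) (-1) s := by
      simpa using (hasDerivAt_id s).const_sub (1:ℝ)
    have h6 := h5.log hne
    exact ((hasDerivAt_id s).add h4).add h6
  have mono : MonotoneOn f (Set.Ico (0:ℝ) 1) := by
    apply monotoneOn_of_deriv_nonneg (convex_Ico 0 1)
    · exact fun s hs => ((hd s hs.2).continuousAt).continuousWithinAt
    · rw [interior_Ico]
      exact fun s hs => ((hd s hs.2).differentiableAt).differentiableWithinAt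
    · rw [interior_Ico]
      intro s hs
      rw [(hd s hs.2).deriv]
      have h0 : (0:ℝ) < 1 - s := by linarith [hs.2]
      have heq : 1 + (2*s*(2*(1-s)) - s^2*(-2))/(2*(1-s))^2 + (-1)/(1-s)
          = s^2/(2*(1-s)^2) := by
        field_simp
        ring
      rw [heq]
      positivity
  have h0 : f 0 = 0 := by simp [hf]
  have := mono (Set.mem_Ico.mpr ⟨le_refl 0, one_pos⟩) (Set.mem_Ico.mpr ⟨hy, hy1⟩) hy
  rw [h0] at this
  simp only [hf] at this
  linarith

lemma gauss_exp_sq {s : ℝ} (hs : s < 1/2) :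
    Integrable (fun z => Real.exp (s * z^2)) (gaussianReal 0 1) ∧
    ∫ z, Real.exp (s * z^2) ∂(gaussianReal 0 1) = (Real.sqrt (1 - 2*s))⁻¹ := by
  have hb : (0:ℝ) < 1/2 - s := by linarith
  have h1 : gaussianReal 0 1 = (volume : Measure ℝ).withDensity (gaussianPDF 0 1) :=
    gaussianReal_of_var_ne_zero 0 one_ne_zero
  have hpdf : ∀ z : ℝ, gaussianPDFReal 0 1 z = (Real.sqrt (2*π))⁻¹ * Real.exp (-(1/2) * z^2) := by
    intro z
    simp only [gaussianPDFReal, NNReal.coe_one, mul_one, sub_zero]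
    ring_nf
  have hkey : ∀ z : ℝ, Real.exp (s * z^2) * gaussianPDFReal 0 1 z
      = (Real.sqrt (2*π))⁻¹ * Real.exp (-(1/2 - s) * z^2) := by
    intro z
    rw [hpdf z, ← mul_assoc, mul_comm (Real.exp _) ((Real.sqrt (2*π))⁻¹), mul_assoc,
      ← Real.exp_add]
    ring_nf
  have hint : Integrable (fun z : ℝ => Real.exp (s * z^2) * gaussianPDFReal 0 1 z) := by
    have := (integrable_exp_neg_mul_sq hb).const_mul (Real.sqrt (2*π))⁻¹
    exact this.congr (by filter_upwards with z using (hkey z).symm)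
  constructor
  · rw [h1]
    rw [integrable_withDensity_iff (measurable_gaussianPDF 0 1)
      (by filter_upwards with z using ENNReal.ofReal_lt_top)]
    refine hint.congr ?_
    filter_upwards with z
    rw [gaussianPDF_def]
    simp only []
    rw [ENNReal.toReal_ofReal (gaussianPDFReal_nonneg 0 1 z)]
  · rw [h1]
    have hmdef : (volume : Measure ℝ).withDensity (gaussianPDF 0 1)
        = (volume : Measure ℝ).withDensity
          (fun z => ((Real.toNNReal (gaussianPDFReal 0 1 z) : ℝ≥0) : ℝ≥0∞)) := rfl
    rw [hmdef, integral_withDensity_eq_integral_smul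
      ((measurable_gaussianPDFReal 0 1).real_toNNReal) (fun z => Real.exp (s * z^2))]
    have : ∀ z : ℝ, (Real.toNNReal (gaussianPDFReal 0 1 z) : ℝ≥0) • Real.exp (s * z^2)
        = (Real.sqrt (2*π))⁻¹ * Real.exp (-(1/2 - s) * z^2) := by
      intro z
      rw [NNReal.smul_def, smul_eq_mul, Real.coe_toNNReal _ (gaussianPDFReal_nonneg 0 1 z),
        mul_comm, hkey z]
    rw [integral_congr_ae (by filter_upwards with z using this z)]
    rw [integral_const_mul, integral_gaussian]
    have h2pi : (0:ℝ) < 2*π := by positivity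
    rw [show π/(1/2 - s) = (2*π) / (1-2*s) by field_simp]
    rw [Real.sqrt_div (le_of_lt h2pi)]
    have hne : Real.sqrt (2*π) ≠ 0 := ne_of_gt (Real.sqrt_pos.mpr h2pi)
    field_simp

/-- Laurent–Massart upper-tail concentration inequality for weighted sums of
centered chi-squared variables. -/
theorem stmt_0
    {Ω : Type*} [MeasurableSpace Ω] (P : Measure Ω) [IsProbabilityMeasure P]
    {N : ℕ} (Z : Fin N → Ω → ℝ)
    (hindep : iIndepFun Z P)
    (hlaw : ∀ i, Measure.map (Z i) P = gaussianReal 0 1)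
    (η : Fin N → ℝ) (hη : ∀ i, 0 ≤ η i) (hη0 : η ≠ 0)
    (x : ℝ) (hx : 0 < x) :
    P {ω | 2 * Real.sqrt (∑ i, η i ^ 2) * Real.sqrt x + 2 * (⨆ i, η i) * x
            ≤ ∑ i, η i * (Z i ω ^ 2 - 1)}
      ≤ ENNReal.ofReal (Real.exp (-x)) := by
  classical
  obtain ⟨i0, hi0⟩ : ∃ i, η i ≠ 0 := by
    by_contra h; push_neg at h; exact hη0 (funext h)
  have hi0' : 0 < η i0 := lt_of_le_of_ne (hη i0) (Ne.symm hi0)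
  haveI : Nonempty (Fin N) := ⟨i0⟩
  set b := ⨆ i, η i with hb
  have hbdd : BddAbove (Set.range η) := Set.Finite.bddAbove (Set.finite_range η)
  have hble : ∀ i, η i ≤ b := fun i => le_ciSup hbdd i
  have hbpos : 0 < b := lt_of_lt_of_le hi0' (hble i0)
  set v := ∑ i, η i ^ 2 with hv
  have hvpos : 0 < v :=
    Finset.sum_pos' (fun i _ => sq_nonneg _) ⟨i0, Finset.mem_univ _, by positivity⟩
  set sv := Real.sqrt v with hsvdef
  have hsv : 0 < sv := Real.sqrt_pos.mpr hvpos
  set sx := Real.sqrt x with hsxdef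
  have hsx : 0 < sx := Real.sqrt_pos.mpr hx
  have hsx2 : sx^2 = x := Real.sq_sqrt hx.le
  have hsv2 : sv^2 = v := Real.sq_sqrt hvpos.le
  set D := sv + 2*b*sx with hD
  have hDpos : 0 < D := by positivity
  set t := sx / D with ht
  have htpos : 0 < t := by positivity
  have h2tb : 1 - 2*t*b = sv / D := by
    rw [ht]; field_simp; ring
  have hDb : 0 < 1 - 2*t*b := by rw [h2tb]; positivity
  set a := 2*sv*sx + 2*b*x with ha
  -- measurable modifications
  have haem : ∀ i, AEMeasurable (Z i) P := by
    intro i; by_contra h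
    have h2 := hlaw i
    rw [Measure.map_of_not_aemeasurable h] at h2
    have h3 : (0 : Measure ℝ) Set.univ = (gaussianReal 0 1) Set.univ := by rw [h2]
    simp at h3
  set Z' : Fin N → Ω → ℝ := fun i => (haem i).mk (Z i) with hZ'
  have hZ'meas : ∀ i, Measurable (Z' i) := fun i => (haem i).measurable_mk
  have hZae : ∀ i, Z i =ᵐ[P] Z' i := fun i => (haem i).ae_eq_mk
  have hae : ∀ᵐ ω ∂P, ∀ i, Z i ω = Z' i ω := ae_all_iff.mpr hZae
  have hlaw' : ∀ i, Measure.map (Z' i) P = gaussianReal 0 1 := by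
    intro i; rw [← Measure.map_congr (hZae i)]; exact hlaw i
  have hindep' : iIndepFun Z' P := by
    rw [iIndepFun_iff_measure_inter_preimage_eq_mul] at hindep ⊢
    intro S sets hsets
    have h1 : P (⋂ i ∈ S, Z' i ⁻¹' sets i) = P (⋂ i ∈ S, Z i ⁻¹' sets i) := by
      apply measure_congr
      rw [Filter.eventuallyEq_set]
      filter_upwards [hae] with ω hω
      simp only [Set.mem_iInter, Set.mem_preimage]
      constructor <;> intro h i hi
      · rw [hω i]; exact h i hi
      · rw [← hω i]; exact h i hi
    rw [h1, hindep S hsets]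
    refine Finset.prod_congr rfl fun i _ => ?_
    apply measure_congr
    rw [Filter.eventuallyEq_set]
    filter_upwards [hae] with ω hω
    simp [Set.mem_preimage, hω i]
  set X : Fin N → Ω → ℝ := fun i ω => η i * (Z' i ω ^ 2 - 1) with hX
  have hXmeas : ∀ i, Measurable (X i) :=
    fun i => (((hZ'meas i).pow_const 2).sub measurable_const).const_mul (η i)
  have hXindep : iIndepFun X P := by
    exact hindep'.comp (fun i (z : ℝ) => η i * (z^2 - 1))
      (fun i => ((measurable_id.pow_const 2).sub measurable_const).const_mul (η i))
  have hslt : ∀ i, t * η i < 1/2 := by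
    intro i
    have h1 : t * η i ≤ t * b := mul_le_mul_of_nonneg_left (hble i) htpos.le
    nlinarith
  have hsnn : ∀ i, 0 ≤ t * η i := fun i => mul_nonneg htpos.le (hη i)
  have hint1 : ∀ i, Integrable (fun ω => Real.exp (t * η i * (Z' i ω)^2)) P := by
    intro i
    have h := (gauss_exp_sq (hslt i)).1
    rw [← hlaw' i] at h
    exact (integrable_map_measure
      ((Measurable.aestronglyMeasurable (by fun_prop :
        Measurable fun z : ℝ => Real.exp (t * η i * z^2))))
      (hZ'meas i).aemeasurable).mp h
  have hintX : ∀ i, Integrable (fun ω => Real.exp (t * X i ω)) P := by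
    intro i
    have heq : (fun ω => Real.exp (t * X i ω))
        = fun ω => Real.exp (-(t * η i)) * Real.exp (t * η i * (Z' i ω)^2) := by
      funext ω; rw [← Real.exp_add]; congr 1; simp only [hX]; ring
    rw [heq]
    exact (hint1 i).const_mul _
  have hmgf : ∀ i, mgf (X i) P t ≤ Real.exp (t^2 * η i^2 / (1 - 2*t*b)) := by
    intro i
    have hs2 : 0 < 1 - 2*(t * η i) := by
      have := hslt i; linarith
    have hval : mgf (X i) P t
        = Real.exp (-(t * η i)) * (Real.sqrt (1 - 2*(t * η i)))⁻¹ := by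
      rw [mgf]
      have heq : (fun ω => Real.exp (t * X i ω))
          = fun ω => Real.exp (-(t * η i)) * Real.exp (t * η i * (Z' i ω)^2) := by
        funext ω; rw [← Real.exp_add]; congr 1; simp only [hX]; ring
      rw [heq, integral_const_mul]
      congr 1
      have hmap : ∫ ω, Real.exp (t * η i * (Z' i ω)^2) ∂P
          = ∫ z, Real.exp (t * η i * z^2) ∂(Measure.map (Z' i) P) := by
        rw [integral_map (hZ'meas i).aemeasurable
          ((Measurable.aestronglyMeasurable (by fun_prop :
            Measurable fun z : ℝ => Real.exp (t * η i * z^2))))]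
      rw [hmap, hlaw' i, (gauss_exp_sq (hslt i)).2]
    rw [hval]
    have hlog : (Real.sqrt (1 - 2*(t * η i)))⁻¹
        = Real.exp (-(Real.log (1 - 2*(t * η i)) / 2)) := by
      rw [Real.exp_neg, ← Real.log_sqrt hs2.le,
        Real.exp_log (Real.sqrt_pos.mpr hs2)]
    rw [hlog, ← Real.exp_add, Real.exp_le_exp]
    have hkey := lm_log (y := 2*(t * η i)) (by linarith [hsnn i]) (by linarith)
    have h3 : -(t * η i) + -(Real.log (1 - 2*(t * η i)) / 2)
        ≤ (t * η i)^2 / (1 - 2*(t * η i)) := by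
      have hne : (1 - 2*(t*η i)) ≠ 0 := ne_of_gt hs2
      have h4 : (2*(t*η i))^2 / (2*(1 - 2*(t*η i))) = 2*((t*η i)^2/(1 - 2*(t*η i))) := by
        field_simp
      rw [h4] at hkey
      linarith
    refine h3.trans ?_
    have h5 : (t * η i)^2 = t^2 * η i^2 := by ring
    rw [h5]
    have hden : 1 - 2*t*b ≤ 1 - 2*(t*η i) := by
      have := mul_le_mul_of_nonneg_left (hble i) htpos.le; linarith
    gcongr t ^ 2 * η i ^ 2 / ?_
  have hSum : mgf (∑ i, X i) P t = ∏ i, mgf (X i) P t :=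
    hXindep.mgf_sum hXmeas Finset.univ
  have hSint : Integrable (fun ω => Real.exp (t * (∑ i, X i) ω)) P :=
    hXindep.integrable_exp_mul_sum hXmeas (fun i _ => hintX i)
  have chern := measure_ge_le_exp_mul_mgf (X := ∑ i, X i) (μ := P) a htpos.le hSint
  have hmgfbound : mgf (∑ i, X i) P t ≤ Real.exp (t^2 * v / (1 - 2*t*b)) := by
    rw [hSum]
    calc ∏ i, mgf (X i) P t ≤ ∏ i, Real.exp (t^2 * η i^2 / (1 - 2*t*b)) :=
          Finset.prod_le_prod (fun i _ => mgf_nonneg) (fun i _ => hmgf i)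
      _ = Real.exp (∑ i, t^2 * η i^2 / (1 - 2*t*b)) := (Real.exp_sum _ _).symm
      _ = Real.exp (t^2 * v / (1 - 2*t*b)) := by
          congr 1
          rw [hv, Finset.mul_sum, Finset.sum_div]
  have hfinal : Real.exp (-t * a) * Real.exp (t^2 * v / (1 - 2*t*b)) = Real.exp (-x) := by
    rw [← Real.exp_add]
    congr 1
    rw [h2tb, div_div_eq_mul_div, ha, ht, hD, ← hsx2, ← hsv2]
    have h1 : sv + 2*b*sx ≠ 0 := by rw [hD] at hDpos; exact ne_of_gt hDpos
    have h2 : sv ≠ 0 := ne_of_gt hsv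
    field_simp
    ring
  have htail : (P {ω | a ≤ (∑ i, X i) ω}).toReal ≤ Real.exp (-x) := by
    calc (P {ω | a ≤ (∑ i, X i) ω}).toReal
        ≤ Real.exp (-t * a) * mgf (∑ i, X i) P t := chern
      _ ≤ Real.exp (-t * a) * Real.exp (t^2 * v / (1 - 2*t*b)) := by
          exact mul_le_mul_of_nonneg_left hmgfbound (Real.exp_nonneg _)
      _ = Real.exp (-x) := hfinal
  have hset : P {ω | a ≤ ∑ i, η i * (Z i ω ^ 2 - 1)} = P {ω | a ≤ (∑ i, X i) ω} := by
    apply measure_congr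
    rw [Filter.eventuallyEq_set]
    filter_upwards [hae] with ω hω
    have hsum : ∑ i, η i * (Z i ω ^ 2 - 1) = (∑ i, X i) ω := by
      rw [Finset.sum_apply]
      exact Finset.sum_congr rfl fun i _ => by rw [hω i]
    simp only [Set.mem_setOf_eq, hsum]
  rw [hset]
  rw [← ENNReal.ofReal_toReal (measure_ne_top P _)]
  exact ENNReal.ofReal_le_ofReal htail
end

section
/- Let Z_1,...,Z_N be i.i.d. standard normal random variables and let η_1,...,η_N ≥ 0 be constants, not all zero. Define X = Σ_{i=1}^N η_i (Z_i² − 1). Then for every x > 0, P(X ≤ −2‖η‖₂√x) ≤ exp(−x). -/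
open MeasureTheory ProbabilityTheory Real
open scoped ENNReal NNReal


lemma aux_iIndepFun_ae_eq {Ω ι : Type*} [MeasurableSpace Ω] {μ : Measure Ω}
    {β : ι → Type*} [m : ∀ i, MeasurableSpace (β i)] {f g : ∀ i, Ω → β i}
    (hf : iIndepFun f μ) (h : ∀ i, f i =ᵐ[μ] g i) : iIndepFun g μ := by
  rw [iIndepFun_iff_measure_inter_preimage_eq_mul] at hf ⊢
  intro S sets hsets
  have h1 : ∀ i, (f i ⁻¹' sets i : Set Ω) =ᵐ[μ] (g i ⁻¹' sets i : Set Ω) :=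
    fun i => (h i).fun_comp (sets i)
  calc μ (⋂ i ∈ S, g i ⁻¹' sets i) = μ (⋂ i ∈ S, f i ⁻¹' sets i) :=
        measure_congr (EventuallyEq.countable_bInter S.countable_toSet
          (fun i _ => (h1 i).symm))
    _ = ∏ i ∈ S, μ (f i ⁻¹' sets i) := hf S hsets
    _ = ∏ i ∈ S, μ (g i ⁻¹' sets i) := Finset.prod_congr rfl fun i _ => measure_congr (h1 i)

lemma aux_exp_le (v : ℝ) (hv : 0 ≤ v) : Real.exp (v - v ^ 2 / 2) ≤ 1 + v := by
  have hderiv : ∀ w : ℝ, HasDerivAt (fun w : ℝ => (1 + w) * Real.exp (w ^ 2 / 2 - w))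
      (Real.exp (w ^ 2 / 2 - w) * w ^ 2) w := by
    intro w
    have h1 : HasDerivAt (fun w : ℝ => w ^ 2 / 2 - w) (w - 1) w := by
      have := ((hasDerivAt_pow 2 w).div_const 2).fun_sub (hasDerivAt_id w)
      simpa using this
    have h3 := ((hasDerivAt_id w).const_add (1:ℝ)).fun_mul h1.exp
    refine h3.congr_deriv ?_
    simp only [id_eq]
    ring
  have hmono : MonotoneOn (fun w : ℝ => (1 + w) * Real.exp (w ^ 2 / 2 - w)) (Set.Ici 0) := by
    refine monotoneOn_of_deriv_nonneg (convex_Ici 0) (Continuous.continuousOn (by continuity))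
      (fun w _ => (hderiv w).differentiableAt.differentiableWithinAt) (fun w _ => ?_)
    rw [(hderiv w).deriv]
    positivity
  have key : 1 ≤ (1 + v) * Real.exp (v ^ 2 / 2 - v) := by
    have := hmono (Set.self_mem_Ici) (Set.mem_Ici.mpr hv) hv
    simpa using this
  have hmul : Real.exp (v - v ^ 2 / 2) * Real.exp (v ^ 2 / 2 - v) = 1 := by
    rw [← Real.exp_add, show (v - v ^ 2 / 2) + (v ^ 2 / 2 - v) = 0 by ring, Real.exp_zero]
  nlinarith [Real.exp_pos (v ^ 2 / 2 - v), Real.exp_pos (v - v ^ 2 / 2)]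


lemma aux_integral_gauss (c : ℝ) (hc : 0 ≤ c) :
    ∫ z, Real.exp (-(c * z ^ 2)) ∂(gaussianReal 0 1) = (Real.sqrt (1 + 2 * c))⁻¹ := by
  rw [gaussianReal_of_var_ne_zero 0 one_ne_zero]
  have hd : (gaussianPDF 0 1) = fun z => ((gaussianPDFReal 0 1 z).toNNReal : ℝ≥0∞) := by
    funext z; rfl
  rw [hd, integral_withDensity_eq_integral_smul
    ((measurable_gaussianPDFReal 0 1).real_toNNReal)]
  have heq : ∀ z : ℝ, ((gaussianPDFReal 0 1 z).toNNReal : ℝ≥0) • Real.exp (-(c * z ^ 2))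
      = (Real.sqrt (2 * π))⁻¹ * Real.exp (-(c + 1/2) * z ^ 2) := by
    intro z
    rw [NNReal.smul_def, smul_eq_mul, Real.coe_toNNReal _ (gaussianPDFReal_nonneg 0 1 z)]
    rw [gaussianPDFReal]
    push_cast
    rw [show (2:ℝ) * π * 1 = 2 * π by ring, one_div, mul_assoc, ← Real.exp_add]
    congr 1
    ring
  simp_rw [heq]
  rw [integral_const_mul, integral_gaussian]
  rw [← Real.sqrt_inv, ← Real.sqrt_mul (by positivity), ← Real.sqrt_inv]
  congr 1
  have hπ : (0:ℝ) < π := Real.pi_pos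
  field_simp
  ring



lemma aux_integral_exp {Ω : Type*} [MeasurableSpace Ω] {P : Measure Ω}
    {W : Ω → ℝ} (hW : Measurable W) (hlaw : Measure.map W P = gaussianReal 0 1)
    (c : ℝ) (hc : 0 ≤ c) :
    ∫ ω, Real.exp (-(c * (W ω ^ 2 - 1))) ∂P = Real.exp c * (Real.sqrt (1 + 2 * c))⁻¹ := by
  have h1 : ∫ ω, Real.exp (-(c * (W ω ^ 2 - 1))) ∂P
      = ∫ z, Real.exp (-(c * (z ^ 2 - 1))) ∂(Measure.map W P) := by
    rw [integral_map hW.aemeasurable]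
    exact (((measurable_id.pow_const 2).sub_const 1).const_mul c).neg.exp.aestronglyMeasurable
  rw [h1, hlaw]
  have h2 : ∀ z : ℝ, Real.exp (-(c * (z ^ 2 - 1))) = Real.exp c * Real.exp (-(c * z ^ 2)) := by
    intro z
    rw [← Real.exp_add]
    congr 1
    ring
  simp_rw [h2]
  rw [integral_const_mul, aux_integral_gauss c hc]

lemma aux_integrable {Ω : Type*} [MeasurableSpace Ω] {P : Measure Ω} [IsProbabilityMeasure P]
    {W : Ω → ℝ} (hW : Measurable W) (c : ℝ) (hc : 0 ≤ c) :
    Integrable (fun ω => Real.exp (-(c * (W ω ^ 2 - 1)))) P := by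
  refine Integrable.mono' (integrable_const (Real.exp c))
    ((((hW.pow_const 2).sub_const 1).const_mul c).neg.exp.aestronglyMeasurable)
    (ae_of_all _ fun ω => ?_)
  rw [Real.norm_eq_abs, abs_of_pos (Real.exp_pos _), Real.exp_le_exp]
  nlinarith [sq_nonneg (W ω)]

lemma aux_mgf_bound (c : ℝ) (hc : 0 ≤ c) :
    Real.exp c * (Real.sqrt (1 + 2 * c))⁻¹ ≤ Real.exp (c ^ 2) := by
  have hpos : (0:ℝ) < 1 + 2 * c := by linarith
  have hsq : 0 < Real.sqrt (1 + 2 * c) := Real.sqrt_pos.mpr hpos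
  have h1 : Real.exp (c - c ^ 2) ≤ Real.sqrt (1 + 2 * c) := by
    rw [show Real.exp (c - c ^ 2) = Real.sqrt (Real.exp (2 * c - (2 * c) ^ 2 / 2)) by
      rw [show (2 * c - (2 * c) ^ 2 / 2) = 2 * (c - c ^ 2) by ring, two_mul, Real.exp_add,
        ← sq, Real.sqrt_sq (Real.exp_nonneg _)]]
    exact Real.sqrt_le_sqrt (aux_exp_le (2 * c) (by linarith))
  have h2 := mul_le_mul_of_nonneg_left h1 (Real.exp_nonneg (c ^ 2))
  rw [← Real.exp_add, show c ^ 2 + (c - c ^ 2) = c by ring] at h2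
  rw [mul_inv_le_iff₀ hsq]
  linarith

/-- Laurent–Massart lower-tail concentration inequality for weighted sums of
centered chi-squared variables. -/

theorem stmt_1
    {Ω : Type*} [MeasurableSpace Ω] (P : Measure Ω) [IsProbabilityMeasure P]
    {N : ℕ} (Z : Fin N → Ω → ℝ)
    (hindep : iIndepFun Z P)
    (hlaw : ∀ i, Measure.map (Z i) P = gaussianReal 0 1)
    (η : Fin N → ℝ) (hη : ∀ i, 0 ≤ η i) (hη0 : η ≠ 0)
    (x : ℝ) (hx : 0 < x) :
    P {ω | ∑ i, η i * (Z i ω ^ 2 - 1) ≤ -(2 * Real.sqrt (∑ i, η i ^ 2) * Real.sqrt x)}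
      ≤ ENNReal.ofReal (Real.exp (-x)) := by
  classical
  set s : ℝ := ∑ i, η i ^ 2 with hs_def
  have hs_pos : 0 < s := by
    obtain ⟨j, hj⟩ := Function.ne_iff.mp hη0
    exact Finset.sum_pos' (fun i _ => sq_nonneg _)
      ⟨j, Finset.mem_univ j, pow_pos (lt_of_le_of_ne (hη j) (Ne.symm hj)) 2⟩
  have hAE : ∀ i, AEMeasurable (Z i) P := by
    intro i
    by_contra hcon
    have h := hlaw i
    rw [Measure.map_of_not_aemeasurable hcon] at h
    have h1 : (gaussianReal 0 1 : Measure ℝ) Set.univ = 1 := measure_univ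
    rw [← h] at h1
    simp at h1
  set W : Fin N → Ω → ℝ := fun i => (hAE i).mk (Z i) with hW_def
  have hW_meas : ∀ i, Measurable (W i) := fun i => (hAE i).measurable_mk
  have hZW : ∀ i, Z i =ᵐ[P] W i := fun i => (hAE i).ae_eq_mk
  have hlawW : ∀ i, Measure.map (W i) P = gaussianReal 0 1 := fun i => by
    rw [← Measure.map_congr (hZW i), hlaw i]
  have hindepW : iIndepFun W P := aux_iIndepFun_ae_eq hindep hZW
  set ε : ℝ := -(2 * Real.sqrt s * Real.sqrt x) with hε_def
  have hset : P {ω | ∑ i, η i * (Z i ω ^ 2 - 1) ≤ ε}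
      = P {ω | ∑ i, η i * (W i ω ^ 2 - 1) ≤ ε} := by
    refine measure_congr ?_
    have hall : ∀ᵐ ω ∂P, ∀ i, Z i ω = W i ω := ae_all_iff.mpr hZW
    filter_upwards [hall] with ω hω
    have hsum : ∑ i, η i * (Z i ω ^ 2 - 1) = ∑ i, η i * (W i ω ^ 2 - 1) :=
      Finset.sum_congr rfl fun i _ => by rw [hω i]
    exact congrArg (fun a => a ≤ ε) hsum
  rw [hset]
  -- the independent summands
  set X : Fin N → Ω → ℝ := fun i ω => η i * (W i ω ^ 2 - 1) with hX_def
  have hX_meas : ∀ i, Measurable (X i) :=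
    fun i => (((hW_meas i).pow_const 2).sub_const 1).const_mul (η i)
  have hindepX : iIndepFun X P := by
    exact hindepW.comp (fun i z => η i * (z ^ 2 - 1))
      (fun i => ((measurable_id.pow_const 2).sub_const 1).const_mul (η i))
  set lam : ℝ := Real.sqrt x / Real.sqrt s with hlam_def
  have hlam_nonneg : 0 ≤ lam := div_nonneg (Real.sqrt_nonneg _) (Real.sqrt_nonneg _)
  have hc_nonneg : ∀ i, 0 ≤ lam * η i := fun i => mul_nonneg hlam_nonneg (hη i)
  have harg : ∀ i, (fun ω => Real.exp (-lam * X i ω))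
      = fun ω => Real.exp (-((lam * η i) * (W i ω ^ 2 - 1))) := by
    intro i
    funext ω
    congr 1
    simp only [hX_def]
    ring
  have hint : ∀ i ∈ Finset.univ, Integrable (fun ω => Real.exp (-lam * X i ω)) P := by
    intro i _
    rw [harg i]
    exact aux_integrable (hW_meas i) _ (hc_nonneg i)
  have hint_sum : Integrable (fun ω => Real.exp (-lam * (∑ i, X i) ω)) P :=
    hindepX.integrable_exp_mul_sum hX_meas hint
  have hcher := measure_le_le_exp_mul_mgf (μ := P) (X := ∑ i, X i) ε
    (neg_nonpos.mpr hlam_nonneg) hint_sum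
  have hmgf_eq : mgf (∑ i, X i) P (-lam) = ∏ i, mgf (X i) P (-lam) :=
    hindepX.mgf_sum hX_meas Finset.univ
  have hmgf_le : ∀ i, mgf (X i) P (-lam) ≤ Real.exp ((lam * η i) ^ 2) := by
    intro i
    have h1 : mgf (X i) P (-lam) = ∫ ω, Real.exp (-lam * X i ω) ∂P := rfl
    rw [h1, harg i, aux_integral_exp (hW_meas i) (hlawW i) _ (hc_nonneg i)]
    exact aux_mgf_bound _ (hc_nonneg i)
  have hprod : ∏ i, mgf (X i) P (-lam) ≤ Real.exp (lam ^ 2 * s) := by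
    calc ∏ i, mgf (X i) P (-lam) ≤ ∏ i, Real.exp ((lam * η i) ^ 2) :=
          Finset.prod_le_prod (fun i _ => mgf_nonneg) (fun i _ => hmgf_le i)
      _ = Real.exp (∑ i, (lam * η i) ^ 2) := by rw [Real.exp_sum]
      _ = Real.exp (lam ^ 2 * s) := by
          congr 1
          rw [hs_def, Finset.mul_sum]
          exact Finset.sum_congr rfl fun i _ => by ring
  have hsx : Real.sqrt s ^ 2 = s := Real.sq_sqrt hs_pos.le
  have hxx : Real.sqrt x ^ 2 = x := Real.sq_sqrt hx.le
  have hsne : Real.sqrt s ≠ 0 := (Real.sqrt_pos.mpr hs_pos).ne'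
  have hkey : -(-lam) * ε + lam ^ 2 * s = -x := by
    rw [hε_def, hlam_def]
    field_simp
    nlinarith [hsx, hxx, Real.sqrt_nonneg s, Real.sqrt_nonneg x]
  have hfinal : (P {ω | ∑ i, η i * (W i ω ^ 2 - 1) ≤ ε}).toReal ≤ Real.exp (-x) := by
    have hsets : {ω | (∑ i, X i) ω ≤ ε} = {ω | ∑ i, η i * (W i ω ^ 2 - 1) ≤ ε} := by
      ext ω
      simp [hX_def, Finset.sum_apply]
    rw [← hsets]
    refine hcher.trans ?_
    rw [hmgf_eq]
    calc Real.exp (-(-lam) * ε) * ∏ i, mgf (X i) P (-lam)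
        ≤ Real.exp (-(-lam) * ε) * Real.exp (lam ^ 2 * s) :=
          mul_le_mul_of_nonneg_left hprod (Real.exp_nonneg _)
      _ = Real.exp (-(-lam) * ε + lam ^ 2 * s) := (Real.exp_add _ _).symm
      _ = Real.exp (-x) := by rw [hkey]
  calc P {ω | ∑ i, η i * (W i ω ^ 2 - 1) ≤ ε}
      = ENNReal.ofReal ((P {ω | ∑ i, η i * (W i ω ^ 2 - 1) ≤ ε}).toReal) :=
        (ENNReal.ofReal_toReal (measure_ne_top P _)).symm
    _ ≤ ENNReal.ofReal (Real.exp (-x)) := ENNReal.ofReal_le_ofReal hfinal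
end

section
/- Let ϖ = Σ_{j=1}^{N} η_j Z_j² where Z_1,...,Z_N are i.i.d. standard normal, η_j ≥ 0, Σ η_j = 1, and Var(ϖ) = 2 Σ η_j² =: v². Then for any 0 < r < 1, P(ϖ ≤ r) ≤ exp(−C(r)/v²) for a constant C(r) > 0 depending only on r. -/
open MeasureTheory ProbabilityTheory Real
open scoped ENNReal NNReal

lemma aux_iIndepFun_ae_eq_s9 {Ω : Type} [MeasurableSpace Ω] {P : Measure Ω} [IsProbabilityMeasure P]
    {N : ℕ} {f g : Fin N → Ω → ℝ} (h : iIndepFun f P)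
    (hfg : ∀ i, f i =ᵐ[P] g i) :
    iIndepFun g P := by
  rw [iIndepFun_iff_measure_inter_preimage_eq_mul] at h ⊢
  intro S sets hsets
  have hae : ∀ᵐ ω ∂P, ∀ i, f i ω = g i ω := ae_all_iff.mpr hfg
  have h1 : ∀ i, P (g i ⁻¹' sets i) = P (f i ⁻¹' sets i) := by
    intro i
    refine measure_congr ?_
    filter_upwards [hfg i] with ω hω
    show (g i ω ∈ sets i) = (f i ω ∈ sets i)
    rw [hω]
  have h2 : P (⋂ i ∈ S, g i ⁻¹' sets i) = P (⋂ i ∈ S, f i ⁻¹' sets i) := by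
    refine measure_congr ?_
    filter_upwards [hae] with ω hω
    show (ω ∈ ⋂ i ∈ S, g i ⁻¹' sets i) = (ω ∈ ⋂ i ∈ S, f i ⁻¹' sets i)
    simp only [Set.mem_iInter, Set.mem_preimage, hω]
  rw [h2, h S hsets]
  exact Finset.prod_congr rfl fun i _ => (h1 i).symm

lemma aux_log_ineq {c : ℝ} (hc : c ≤ 0) : -2*c - 4*c^2 ≤ Real.log (1 - 2*c) := by
  have h0 : (0:ℝ) < 1 - 2*c := by nlinarith
  have h := Real.one_sub_inv_le_log_of_pos h0
  have hy : (1 - 2*c) * (1 - 2*c)⁻¹ = 1 := mul_inv_cancel₀ h0.ne'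
  have h2 : -2*c - 4*c^2 ≤ 1 - (1 - 2*c)⁻¹ := by nlinarith [inv_pos.mpr h0]
  linarith

lemma aux_gauss_int {c : ℝ} (hc : c ≤ 0) :
    ∫ x, exp (c * x ^ 2) ∂(gaussianReal 0 1) ≤ exp (c + 2 * c ^ 2) := by
  have h1 : (0:ℝ) < 1 - 2*c := by nlinarith
  have hb : (0:ℝ) < 1/2 - c := by nlinarith
  rw [gaussianReal_of_var_ne_zero 0 one_ne_zero]
  have hmeas : Measurable fun x => (gaussianPDFReal 0 1 x).toNNReal :=
    (measurable_gaussianPDFReal 0 1).real_toNNReal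
  have hwd : volume.withDensity (gaussianPDF 0 1)
      = volume.withDensity (fun x => ((gaussianPDFReal 0 1 x).toNNReal : ℝ≥0∞)) := rfl
  rw [hwd, integral_withDensity_eq_integral_smul hmeas]
  have heq : ∀ x : ℝ, (gaussianPDFReal 0 1 x).toNNReal • Real.exp (c * x ^ 2)
      = (Real.sqrt (2 * π))⁻¹ * Real.exp (-(1/2 - c) * x ^ 2) := by
    intro x
    rw [NNReal.smul_def, Real.coe_toNNReal _ (gaussianPDFReal_nonneg 0 1 x), gaussianPDFReal]
    push_cast
    rw [smul_eq_mul, show (2*π*(1:ℝ)) = 2*π from by ring, mul_assoc, ← Real.exp_add]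
    congr 1
    ring
  simp_rw [heq]
  rw [integral_const_mul, integral_gaussian]
  have hval : (Real.sqrt (2 * π))⁻¹ * Real.sqrt (π / (1/2 - c)) = (Real.sqrt (1 - 2*c))⁻¹ := by
    rw [Real.sqrt_div pi_pos.le, Real.sqrt_mul (by norm_num : (0:ℝ) ≤ 2),
      show (1 - 2*c) = 2 * (1/2 - c) by ring, Real.sqrt_mul (by norm_num : (0:ℝ) ≤ 2)]
    have hp : Real.sqrt π ≠ 0 := (Real.sqrt_pos.mpr pi_pos).ne'
    have h2 : Real.sqrt 2 ≠ 0 := by positivity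
    have h3 : Real.sqrt (1/2 - c) ≠ 0 := (Real.sqrt_pos.mpr hb).ne'
    field_simp
  rw [hval]
  have hlog := aux_log_ineq hc
  have hsq : Real.sqrt (1 - 2*c) = Real.exp (Real.log (1 - 2*c) / 2) := by
    rw [← Real.log_sqrt h1.le, Real.exp_log (Real.sqrt_pos.mpr h1)]
  rw [hsq, ← Real.exp_neg, Real.exp_le_exp]
  linarith

/-- Lower-tail concentration for a unit-mean weighted chi-squared sum
`ϖ = ∑ η_j Z_j²`: for every `0 < r < 1` there is `C(r) > 0`, depending only on
`r`, such that `P(ϖ ≤ r) ≤ exp(-C(r)/v²)` where `v² = 2 ∑ η_j²  = Var(ϖ)`. -/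
theorem stmt_9 (r : ℝ) (hr0 : 0 < r) (hr1 : r < 1) :
    ∃ C : ℝ, 0 < C ∧
      ∀ (N : ℕ) (Ω : Type) (_ : MeasurableSpace Ω) (P : Measure Ω)
        (_ : IsProbabilityMeasure P) (Z : Fin N → Ω → ℝ) (η : Fin N → ℝ),
        iIndepFun Z P →
        (∀ i, Measure.map (Z i) P = gaussianReal 0 1) →
        (∀ i, 0 ≤ η i) → (∑ i, η i) = 1 →
        P {ω | ∑ i, η i * Z i ω ^ 2 ≤ r}
          ≤ ENNReal.ofReal (Real.exp (-C / (2 * ∑ i, η i ^ 2))) := by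
  have hr : (0:ℝ) < 1 - r := by linarith
  have hC : (0:ℝ) < (1 - r)^2 / 4 := by positivity
  refine ⟨(1 - r)^2 / 4, hC, ?_⟩
  intro N Ω mΩ P hP Z η hindep hZ hη hsum
  haveI := hP
  classical
  set s : ℝ := ∑ i, η i ^ 2 with hs_def
  have hs_nonneg : 0 ≤ s := Finset.sum_nonneg fun i _ => sq_nonneg _
  have hs_pos : 0 < s := by
    rcases hs_nonneg.lt_or_eq with h | h
    · exact h
    · exfalso
      have hzero : ∀ i ∈ Finset.univ, η i ^ 2 = 0 :=
        (Finset.sum_eq_zero_iff_of_nonneg fun i _ => sq_nonneg (η i)).mp h.symm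
      have hz : (∑ i, η i) = 0 := Finset.sum_eq_zero fun i _ => by
        have h2 := hzero i (Finset.mem_univ i)
        exact pow_eq_zero_iff (two_ne_zero) |>.mp h2
      rw [hsum] at hz; norm_num at hz
  have haem : ∀ i, AEMeasurable (Z i) P := by
    intro i
    by_contra hcon
    have h0 := Measure.map_of_not_aemeasurable hcon
    rw [hZ i] at h0
    exact (IsProbabilityMeasure.ne_zero (gaussianReal 0 1)) h0
  set Zm : Fin N → Ω → ℝ := fun i => (haem i).mk (Z i) with hZm_def
  have hZm_meas : ∀ i, Measurable (Zm i) := fun i => (haem i).measurable_mk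
  have hZm_ae : ∀ i, Z i =ᵐ[P] Zm i := fun i => (haem i).ae_eq_mk
  have hZm_map : ∀ i, Measure.map (Zm i) P = gaussianReal 0 1 := fun i => by
    rw [← Measure.map_congr (hZm_ae i), hZ i]
  have hindep' : iIndepFun Zm P := aux_iIndepFun_ae_eq_s9 hindep hZm_ae
  set X : Fin N → Ω → ℝ := fun i ω => η i * Zm i ω ^ 2 with hX_def
  have hX_meas : ∀ i, Measurable (X i) := fun i =>
    measurable_const.mul ((hZm_meas i).pow_const 2)
  have hX_indep : iIndepFun X P :=
    hindep'.comp (fun i x => η i * x ^ 2)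
      (fun i => measurable_const.mul (measurable_id.pow_const 2))
  set t : ℝ := -(1 - r) / (4 * s) with ht_def
  have ht_neg : t ≤ 0 :=
    (div_neg_of_neg_of_pos (by linarith) (by positivity)).le
  -- mgf of each summand
  have hmgf_i : ∀ i, mgf (X i) P t ≤ exp (t * η i + 2 * (t * η i) ^ 2) := by
    intro i
    have hc : t * η i ≤ 0 := mul_nonpos_of_nonpos_of_nonneg ht_neg (hη i)
    have hcont : Continuous fun x : ℝ => exp ((t * η i) * x ^ 2) :=
      Real.continuous_exp.comp (continuous_const.mul (continuous_pow 2))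
    calc mgf (X i) P t
        = ∫ ω, exp ((t * η i) * (Zm i ω) ^ 2) ∂P := by
          refine integral_congr_ae (Filter.Eventually.of_forall fun ω => ?_)
          simp only [hX_def]
          congr 1
          ring
      _ = ∫ x, exp ((t * η i) * x ^ 2) ∂(gaussianReal 0 1) := by
          rw [← hZm_map i, integral_map (hZm_meas i).aemeasurable hcont.aestronglyMeasurable]
      _ ≤ exp ((t * η i) + 2 * (t * η i) ^ 2) := aux_gauss_int hc
  -- mgf of the sum
  have hsum_mgf : mgf (∑ i, X i) P t = ∏ i, mgf (X i) P t :=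
    hX_indep.mgf_sum hX_meas Finset.univ
  have hprod : ∏ i, mgf (X i) P t ≤ exp (t + 2 * t ^ 2 * s) := by
    calc ∏ i, mgf (X i) P t
        ≤ ∏ i, exp (t * η i + 2 * (t * η i) ^ 2) :=
          Finset.prod_le_prod (fun i _ => mgf_nonneg) (fun i _ => hmgf_i i)
      _ = exp (∑ i, (t * η i + 2 * (t * η i) ^ 2)) := (Real.exp_sum _ _).symm
      _ = exp (t + 2 * t ^ 2 * s) := by
          congr 1
          have hterm : ∀ i, t * η i + 2 * (t * η i) ^ 2
              = t * η i + (2 * t ^ 2) * η i ^ 2 := fun i => by ring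
          simp_rw [hterm]
          rw [Finset.sum_add_distrib, ← Finset.mul_sum, ← Finset.mul_sum, hsum, mul_one]
  -- measurability and nonnegativity of the sum
  have hXsum_meas : Measurable (∑ i, X i) := by
    have : Measurable fun ω => ∑ i, X i ω := Finset.measurable_sum _ fun i _ => hX_meas i
    rwa [show (∑ i, X i) = fun ω => ∑ i, X i ω from funext fun ω => Finset.sum_apply _ _ _]
  have hXsum_nonneg : ∀ ω, 0 ≤ (∑ i, X i) ω := fun ω => by
    rw [Finset.sum_apply]
    exact Finset.sum_nonneg fun i _ => mul_nonneg (hη i) (sq_nonneg _)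
  have hint : Integrable (fun ω => exp (t * (∑ i, X i) ω)) P := by
    refine Integrable.mono' (integrable_const 1)
      ((hXsum_meas.const_mul t).exp.aestronglyMeasurable) ?_
    filter_upwards with ω
    rw [Real.norm_eq_abs, abs_of_pos (exp_pos _)]
    calc exp (t * (∑ i, X i) ω) ≤ exp 0 :=
          exp_le_exp.mpr (mul_nonpos_of_nonpos_of_nonneg ht_neg (hXsum_nonneg ω))
      _ = 1 := exp_zero
  -- Chernoff bound
  have hcher := measure_le_le_exp_mul_mgf (μ := P) (X := ∑ i, X i) r ht_neg hint
  -- the two sets have equal measure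
  have hsets : P {ω | ∑ i, η i * Z i ω ^ 2 ≤ r} = P {ω | (∑ i, X i) ω ≤ r} := by
    refine measure_congr ?_
    have hae : ∀ᵐ ω ∂P, ∀ i, Z i ω = Zm i ω := ae_all_iff.mpr hZm_ae
    filter_upwards [hae] with ω hω
    show (∑ i, η i * Z i ω ^ 2 ≤ r) = ((∑ i, X i) ω ≤ r)
    simp only [Finset.sum_apply, hX_def, hω]
  -- final computation
  have hexp : -t * r + (t + 2 * t ^ 2 * s) = -((1 - r) ^ 2 / 4) / (2 * s) := by
    rw [ht_def]
    field_simp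
    ring
  calc P {ω | ∑ i, η i * Z i ω ^ 2 ≤ r}
      = P {ω | (∑ i, X i) ω ≤ r} := hsets
    _ = ENNReal.ofReal ((P {ω | (∑ i, X i) ω ≤ r}).toReal) :=
        (ENNReal.ofReal_toReal (measure_ne_top P _)).symm
    _ ≤ ENNReal.ofReal (exp (-t * r) * mgf (∑ i, X i) P t) :=
        ENNReal.ofReal_le_ofReal hcher
    _ ≤ ENNReal.ofReal (exp (-t * r) * exp (t + 2 * t ^ 2 * s)) := by
        refine ENNReal.ofReal_le_ofReal ?_
        rw [hsum_mgf]
        exact mul_le_mul_of_nonneg_left hprod (exp_pos _).le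
    _ = ENNReal.ofReal (Real.exp (-((1 - r) ^ 2 / 4) / (2 * s))) := by
        rw [← Real.exp_add, hexp]
end

section
/- Let ϖ = Σ_{j=1}^{N} η_{j} Z_j² with Z_j i.i.d. standard normal, η_j ≥ 0 not all zero, Σ_j η_j = 1. Then for every p ≥ 1 there is a constant K_p depending only on p (and not on N or the weights, provided Var(ϖ) is bounded above) such that E[|log ϖ|^p] ≤ K_p. -/
open MeasureTheory ProbabilityTheory Real Set Filter
open scoped ENNReal NNReal

lemma integrable_pow_mul_gexp (n : ℕ) : Integrable (fun x : ℝ => x ^ n * rexp (-(1/2) * x ^ 2)) := by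
  have := integrable_rpow_mul_exp_neg_mul_sq (b := 1/2) (by norm_num) (s := (n : ℝ))
    (lt_of_lt_of_le neg_one_lt_zero (Nat.cast_nonneg n))
  simpa [Real.rpow_natCast] using this

lemma tendsto_pow_mul_gexp (n : ℕ) :
    Tendsto (fun x : ℝ => x ^ n * rexp (-(1/2) * x ^ 2)) atTop (nhds 0) := by
  have h := rpow_mul_exp_neg_mul_sq_isLittleO_exp_neg (b := (1/2 : ℝ)) (by norm_num) (n : ℝ)
  have h2 : Tendsto (fun x : ℝ => rexp (-(1/2) * x)) atTop (nhds 0) := by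
    apply Real.tendsto_exp_atBot.comp
    apply Tendsto.const_mul_atTop_of_neg (by norm_num : (-(1/2) : ℝ) < 0) tendsto_id
  have := h.isBigO.trans_tendsto h2
  refine this.congr' ?_
  filter_upwards [eventually_gt_atTop (0:ℝ)] with x hx
  rw [Real.rpow_natCast]

lemma hasDerivAt_gexp (x : ℝ) :
    HasDerivAt (fun x : ℝ => rexp (-(1/2) * x ^ 2)) (-x * rexp (-(1/2) * x ^ 2)) x := by
  have h1 : HasDerivAt (fun x : ℝ => -(1/2) * x ^ 2) (-x) x := by
    simpa using ((hasDerivAt_pow 2 x).const_mul (-(1/2) : ℝ))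
  simpa [mul_comm] using h1.exp

lemma hasDerivAt_aux1 (x : ℝ) :
    HasDerivAt (fun x : ℝ => -x * rexp (-(1/2) * x ^ 2))
      ((x ^ 2 - 1) * rexp (-(1/2) * x ^ 2)) x := by
  have : HasDerivAt (fun y : ℝ => -y * rexp (-(1/2) * y ^ 2)) _ x :=
    ((hasDerivAt_id x).neg.mul (hasDerivAt_gexp x))
  convert this using 1
  simp only [Pi.neg_apply, id_eq]
  ring

lemma integral_Ioi_sq_gexp :
    ∫ x in Ioi (0:ℝ), x ^ 2 * rexp (-(1/2) * x ^ 2) = Real.sqrt (2 * π) / 2 := by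
  have key : ∫ x in Ioi (0:ℝ), (x ^ 2 - 1) * rexp (-(1/2) * x ^ 2) = 0 := by
    have := integral_Ioi_of_hasDerivAt_of_tendsto' (f := fun x : ℝ => -x * rexp (-(1/2) * x ^ 2))
      (f' := fun x => (x ^ 2 - 1) * rexp (-(1/2) * x ^ 2)) (a := 0) (m := 0)
      (fun x _ => hasDerivAt_aux1 x) ?_ ?_
    · simpa using this
    · apply Integrable.integrableOn
      have : (fun x : ℝ => (x ^ 2 - 1) * rexp (-(1/2) * x ^ 2)) =
          fun x => x ^ 2 * rexp (-(1/2) * x ^ 2) - 1 * rexp (-(1/2) * x ^ 2) := by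
        funext x; ring
      rw [this]
      exact (integrable_pow_mul_gexp 2).sub ((integrable_exp_neg_mul_sq (by norm_num : (0:ℝ) < 1/2)).const_mul 1)
    · have := (tendsto_pow_mul_gexp 1).neg
      simpa using this
  have hsplit : ∫ x in Ioi (0:ℝ), (x ^ 2 - 1) * rexp (-(1/2) * x ^ 2)
      = (∫ x in Ioi (0:ℝ), x ^ 2 * rexp (-(1/2) * x ^ 2)) - ∫ x in Ioi (0:ℝ), rexp (-(1/2) * x ^ 2) := by
    rw [← integral_sub ((integrable_pow_mul_gexp 2).integrableOn)
      ((integrable_exp_neg_mul_sq (by norm_num : (0:ℝ) < 1/2)).integrableOn)]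
    congr 1; funext x; ring
  have hg : ∫ x in Ioi (0:ℝ), rexp (-(1/2) * x ^ 2) = Real.sqrt (2 * π) / 2 := by
    rw [integral_gaussian_Ioi, show π / (1/2 : ℝ) = 2 * π by ring]
  rw [hsplit, hg] at key
  linarith

lemma hasDerivAt_aux2 (x : ℝ) :
    HasDerivAt (fun x : ℝ => -x ^ 3 * rexp (-(1/2) * x ^ 2))
      ((x ^ 4 - 3 * x ^ 2) * rexp (-(1/2) * x ^ 2)) x := by
  have : HasDerivAt (fun y : ℝ => -y ^ 3 * rexp (-(1/2) * y ^ 2)) _ x :=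
    ((hasDerivAt_pow 3 x).neg.mul (hasDerivAt_gexp x))
  convert this using 1
  simp only [Pi.neg_apply]
  ring

lemma integral_Ioi_q_gexp :
    ∫ x in Ioi (0:ℝ), x ^ 4 * rexp (-(1/2) * x ^ 2) = 3 * (Real.sqrt (2 * π) / 2) := by
  have key : ∫ x in Ioi (0:ℝ), (x ^ 4 - 3 * x ^ 2) * rexp (-(1/2) * x ^ 2) = 0 := by
    have := integral_Ioi_of_hasDerivAt_of_tendsto' (f := fun x : ℝ => -x ^ 3 * rexp (-(1/2) * x ^ 2))
      (f' := fun x => (x ^ 4 - 3 * x ^ 2) * rexp (-(1/2) * x ^ 2)) (a := 0) (m := 0)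
      (fun x _ => hasDerivAt_aux2 x) ?_ ?_
    · simpa using this
    · apply Integrable.integrableOn
      have : (fun x : ℝ => (x ^ 4 - 3 * x ^ 2) * rexp (-(1/2) * x ^ 2)) =
          fun x => x ^ 4 * rexp (-(1/2) * x ^ 2) - 3 * (x ^ 2 * rexp (-(1/2) * x ^ 2)) := by
        funext x; ring
      rw [this]
      exact (integrable_pow_mul_gexp 4).sub ((integrable_pow_mul_gexp 2).const_mul 3)
    · have := (tendsto_pow_mul_gexp 3).neg
      simpa using this
  have hsplit : ∫ x in Ioi (0:ℝ), (x ^ 4 - 3 * x ^ 2) * rexp (-(1/2) * x ^ 2)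
      = (∫ x in Ioi (0:ℝ), x ^ 4 * rexp (-(1/2) * x ^ 2))
        - 3 * ∫ x in Ioi (0:ℝ), x ^ 2 * rexp (-(1/2) * x ^ 2) := by
    rw [← integral_const_mul, ← integral_sub ((integrable_pow_mul_gexp 4).integrableOn)
      (((integrable_pow_mul_gexp 2).const_mul 3).integrableOn)]
    congr 1; funext x; ring
  rw [hsplit, integral_Ioi_sq_gexp] at key
  linarith

lemma integral_sq_gexp : ∫ x : ℝ, x ^ 2 * rexp (-(1/2) * x ^ 2) = Real.sqrt (2 * π) := by
  have h : (fun x : ℝ => x ^ 2 * rexp (-(1/2) * x ^ 2))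
      = fun x => |x| ^ 2 * rexp (-(1/2) * |x| ^ 2) := by
    funext x; rw [sq_abs]
  rw [h, integral_comp_abs (f := fun x => x ^ 2 * rexp (-(1/2) * x ^ 2)), integral_Ioi_sq_gexp]
  ring

lemma integral_q_gexp : ∫ x : ℝ, x ^ 4 * rexp (-(1/2) * x ^ 2) = 3 * Real.sqrt (2 * π) := by
  have h : (fun x : ℝ => x ^ 4 * rexp (-(1/2) * x ^ 2))
      = fun x => |x| ^ 4 * rexp (-(1/2) * |x| ^ 2) := by
    funext x
    rw [sq_abs, pow_abs, abs_of_nonneg (by positivity : (0:ℝ) ≤ x ^ 4)]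
  rw [h, integral_comp_abs (f := fun x => x ^ 4 * rexp (-(1/2) * x ^ 2)), integral_Ioi_q_gexp]
  ring

noncomputable abbrev G : Measure ℝ := gaussianReal 0 1


lemma pdfReal_eq (x : ℝ) :
    gaussianPDFReal 0 1 x = (Real.sqrt (2 * π))⁻¹ * rexp (-(1/2) * x ^ 2) := by
  simp only [gaussianPDFReal, NNReal.coe_one, mul_one, sub_zero]
  congr 2
  ring

lemma G_integral (g : ℝ → ℝ) : ∫ x, g x ∂G = ∫ x, gaussianPDFReal 0 1 x * g x := by
  rw [G, gaussianReal_of_var_ne_zero 0 one_ne_zero]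
  have h : gaussianPDF 0 1 = fun x => ((gaussianPDFReal 0 1 x).toNNReal : ℝ≥0∞) := by
    funext x; rfl
  rw [h, integral_withDensity_eq_integral_smul
    (measurable_gaussianPDFReal 0 1).real_toNNReal g]
  congr 1
  funext x
  simp [NNReal.smul_def, Real.coe_toNNReal _ (gaussianPDFReal_nonneg 0 1 x)]

lemma G_lintegral (g : ℝ → ℝ≥0∞) (hg : Measurable g) :
    ∫⁻ x, g x ∂G = ∫⁻ x, gaussianPDF 0 1 x * g x := by
  rw [G, gaussianReal_of_var_ne_zero 0 one_ne_zero,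
    lintegral_withDensity_eq_lintegral_mul _ (measurable_gaussianPDF 0 1) hg]
  rfl

lemma G_integrable_pow (n : ℕ) : Integrable (fun x : ℝ => x ^ n) G := by
  rw [G, gaussianReal_of_var_ne_zero 0 one_ne_zero]
  rw [integrable_withDensity_iff (measurable_gaussianPDF 0 1)
    (Eventually.of_forall fun x => ENNReal.ofReal_lt_top)]
  have h : (fun x : ℝ => x ^ n * (gaussianPDF 0 1 x).toReal)
      = fun x => (Real.sqrt (2 * π))⁻¹ * (x ^ n * rexp (-(1/2) * x ^ 2)) := by
    funext x
    rw [gaussianPDF, ENNReal.toReal_ofReal (gaussianPDFReal_nonneg 0 1 x), pdfReal_eq]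
    ring
  rw [h]
  exact (integrable_pow_mul_gexp n).const_mul _

lemma G_integral_sq : ∫ x, x ^ 2 ∂G = 1 := by
  rw [G_integral]
  have h : (fun x : ℝ => gaussianPDFReal 0 1 x * x ^ 2)
      = fun x => (Real.sqrt (2 * π))⁻¹ * (x ^ 2 * rexp (-(1/2) * x ^ 2)) := by
    funext x; rw [pdfReal_eq]; ring
  rw [h, integral_const_mul, integral_sq_gexp]
  rw [inv_mul_cancel₀]
  positivity

lemma G_integral_q : ∫ x, x ^ 4 ∂G = 3 := by
  rw [G_integral]
  have h : (fun x : ℝ => gaussianPDFReal 0 1 x * x ^ 4)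
      = fun x => (Real.sqrt (2 * π))⁻¹ * (x ^ 4 * rexp (-(1/2) * x ^ 2)) := by
    funext x; rw [pdfReal_eq]; ring
  rw [h, integral_const_mul, integral_q_gexp, ← mul_assoc, mul_comm _ (3:ℝ), mul_assoc,
    inv_mul_cancel₀ (by positivity : Real.sqrt (2*π) ≠ 0), mul_one]

instance : IsProbabilityMeasure G := by rw [G]; infer_instance

lemma G_memLp_sq : MemLp (fun x : ℝ => x ^ 2) 2 G := by
  have hm : AEStronglyMeasurable (fun x : ℝ => x ^ 2) G :=
    (measurable_id.pow_const 2).aestronglyMeasurable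
  rw [memLp_two_iff_integrable_sq hm]
  have h : (fun x : ℝ => (x ^ 2) ^ 2) = fun x : ℝ => x ^ 4 := by
    funext x; ring
  exact h ▸ G_integrable_pow 4

lemma G_ae_ne_zero : ∀ᵐ x ∂G, x ≠ 0 := by
  have habs : G ≪ volume := by
    rw [G]; exact gaussianReal_absolutelyContinuous 0 one_ne_zero
  have : G {(0:ℝ)} = 0 := habs (volume_singleton)
  rw [ae_iff]
  simpa using this


lemma G_lintegral_sq : ∫⁻ x, ENNReal.ofReal (x ^ 2) ∂G = 1 := by
  rw [← ofReal_integral_eq_lintegral_ofReal (G_integrable_pow 2)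
    (Eventually.of_forall fun x => sq_nonneg x), G_integral_sq, ENNReal.ofReal_one]

lemma G_singleton_zero : G {(0:ℝ)} = 0 := by
  have habs : G ≪ volume := gaussianReal_absolutelyContinuous 0 one_ne_zero
  exact habs volume_singleton


noncomputable def ff (t : ℝ) : ℝ := if t ≤ 1 then t ^ (-3/4 : ℝ) else rexp (-(1/2) * t ^ 2)

lemma sqrt_two_pi_le : Real.sqrt (2 * π) ≤ 3 := by
  rw [show (3:ℝ) = Real.sqrt (3 ^ 2) by rw [Real.sqrt_sq]; norm_num]
  apply Real.sqrt_le_sqrt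
  nlinarith [Real.pi_le_four]

lemma one_le_sqrt_two_pi : 1 ≤ Real.sqrt (2 * π) := by
  rw [show (1:ℝ) = Real.sqrt 1 by rw [Real.sqrt_one]]
  apply Real.sqrt_le_sqrt
  nlinarith [Real.pi_gt_three]

lemma ff_nonneg {t : ℝ} (ht : 0 ≤ t) : 0 ≤ ff t := by
  unfold ff
  split
  · exact Real.rpow_nonneg ht _
  · positivity

lemma integrableOn_ff_Ioi : IntegrableOn ff (Ioi 0) := by
  have h1 : IntegrableOn ff (Ioc 0 1) := by
    apply IntegrableOn.congr_fun (f := fun t : ℝ => t ^ (-3/4 : ℝ))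
    · rw [← intervalIntegrable_iff_integrableOn_Ioc_of_le zero_le_one]
      exact intervalIntegral.intervalIntegrable_rpow' (by norm_num)
    · intro t ht; rw [ff, if_pos ht.2]
    · exact measurableSet_Ioc
  have h2 : IntegrableOn ff (Ioi 1) := by
    apply IntegrableOn.congr_fun (f := fun t : ℝ => rexp (-(1/2) * t ^ 2))
    · exact (integrable_exp_neg_mul_sq (by norm_num : (0:ℝ) < 1/2)).integrableOn
    · intro t ht; rw [ff, if_neg (not_le.mpr ht)]
    · exact measurableSet_Ioi
  have : Ioi (0:ℝ) = Ioc 0 1 ∪ Ioi 1 := by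
    rw [Ioc_union_Ioi_eq_Ioi zero_le_one]
  rw [this]
  exact h1.union h2

lemma integral_ff_Ioi : ∫ t in Ioi (0:ℝ), ff t ≤ 11/2 := by
  have hsplit : Ioi (0:ℝ) = Ioc 0 1 ∪ Ioi 1 := (Ioc_union_Ioi_eq_Ioi zero_le_one).symm
  have h1 : ∫ t in Ioc (0:ℝ) 1, ff t = 4 := by
    have e1 : ∫ t in Ioc (0:ℝ) 1, ff t = ∫ t in Ioc (0:ℝ) 1, t ^ (-3/4 : ℝ) := by
      apply setIntegral_congr_fun measurableSet_Ioc
      intro t ht; rw [ff, if_pos ht.2]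
    have e2 : ∫ t in Ioc (0:ℝ) 1, t ^ (-3/4 : ℝ) = ∫ t in (0:ℝ)..1, t ^ (-3/4 : ℝ) := by
      rw [intervalIntegral.integral_of_le zero_le_one]
    rw [e1, e2, integral_rpow (Or.inl (by norm_num))]
    rw [Real.one_rpow, Real.zero_rpow (by norm_num)]
    norm_num
  have h2 : ∫ t in Ioi (1:ℝ), ff t ≤ 3/2 := by
    have e1 : ∫ t in Ioi (1:ℝ), ff t = ∫ t in Ioi (1:ℝ), rexp (-(1/2) * t ^ 2) := by
      apply setIntegral_congr_fun measurableSet_Ioi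
      intro t ht; rw [ff, if_neg (not_le.mpr ht)]
    rw [e1]
    have hmono : ∫ t in Ioi (1:ℝ), rexp (-(1/2) * t ^ 2) ≤ ∫ t in Ioi (0:ℝ), rexp (-(1/2) * t ^ 2) := by
      apply setIntegral_mono_set
        (integrable_exp_neg_mul_sq (by norm_num : (0:ℝ) < 1/2)).integrableOn
        (Eventually.of_forall fun t => (Real.exp_pos _).le)
      exact HasSubset.Subset.eventuallyLE (Ioi_subset_Ioi zero_le_one)
    refine hmono.trans ?_
    rw [integral_gaussian_Ioi, show π / (1/2 : ℝ) = 2 * π by ring]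
    linarith [sqrt_two_pi_le]
  calc ∫ t in Ioi (0:ℝ), ff t
      = (∫ t in Ioc (0:ℝ) 1, ff t) + ∫ t in Ioi (1:ℝ), ff t := by
        rw [hsplit]
        apply setIntegral_union _ measurableSet_Ioi
        · exact integrableOn_ff_Ioi.mono_set (by rw [hsplit]; exact subset_union_left)
        · exact integrableOn_ff_Ioi.mono_set (by rw [hsplit]; exact subset_union_right)
        · rw [Set.disjoint_left]; rintro a ⟨_, h1⟩ h2; exact absurd h2 (not_lt.mpr h1)
    _ ≤ 4 + 3/2 := by rw [h1]; linarith [h2]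
    _ ≤ 11/2 := by norm_num

lemma integrable_ff_abs : Integrable (fun x : ℝ => ff |x|) := by
  have h1 : IntegrableOn (fun x : ℝ => ff |x|) (Ioi 0) := by
    apply IntegrableOn.congr_fun integrableOn_ff_Ioi _ measurableSet_Ioi
    intro x hx
    show ff x = ff |x|
    rw [abs_of_pos hx]
  have h2 : IntegrableOn (fun x : ℝ => ff |x|) (Iic 0) := by
    rw [← Measure.map_neg_eq_self (volume : Measure ℝ)]
    have m : MeasurableEmbedding fun x : ℝ => -x := (Homeomorph.neg ℝ).measurableEmbedding
    rw [m.integrableOn_map_iff]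
    simp_rw [Function.comp_def, abs_neg, neg_preimage, neg_Iic, neg_zero]
    exact Iff.mpr integrableOn_Ici_iff_integrableOn_Ioi h1
  have := h2.union h1
  rwa [Iic_union_Ioi, integrableOn_univ] at this

lemma meas_abs_rpow (c : ℝ) : Measurable fun x : ℝ => |x| ^ c := by
  by_cases hc : c = 0
  · subst hc
    simp only [Real.rpow_zero]
    exact measurable_const
  · have h : (fun x : ℝ => |x| ^ c)
        = fun x => if x = 0 then 0 else rexp (Real.log |x| * c) := by
      funext x
      split
      · next hx => rw [hx, abs_zero, Real.zero_rpow hc]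
      · next hx => rw [Real.rpow_def_of_pos (abs_pos.mpr hx)]
    rw [h]
    apply Measurable.ite (measurableSet_eq) measurable_const
    exact Real.measurable_exp.comp ((Real.measurable_log.comp measurable_abs).mul_const c)

lemma G_lintegral_abs_rpow :
    ∫⁻ x, ENNReal.ofReal (|x| ^ (-3/4 : ℝ)) ∂G ≤ ENNReal.ofReal 11 := by
  have hmeas : Measurable fun x : ℝ => ENNReal.ofReal (|x| ^ (-3/4 : ℝ)) :=
    ((meas_abs_rpow (-3/4)).ennreal_ofReal)
  rw [G_lintegral _ hmeas]
  have hpt : ∀ x : ℝ, gaussianPDF 0 1 x * ENNReal.ofReal (|x| ^ (-3/4 : ℝ))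
      ≤ ENNReal.ofReal (ff |x|) := by
    intro x
    rw [gaussianPDF, ← ENNReal.ofReal_mul (gaussianPDFReal_nonneg 0 1 x)]
    apply ENNReal.ofReal_le_ofReal
    rw [pdfReal_eq]
    have hc : (Real.sqrt (2 * π))⁻¹ * rexp (-(1/2) * x ^ 2) ≤ 1 := by
      apply mul_le_one₀
      · rw [inv_le_one_iff₀]; right; exact one_le_sqrt_two_pi
      · positivity
      · rw [Real.exp_le_one_iff]; nlinarith [sq_nonneg x]
    by_cases h : |x| ≤ 1
    · rw [ff, if_pos h]
      exact mul_le_of_le_one_left (Real.rpow_nonneg (abs_nonneg x) _) hc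
    · rw [ff, if_neg h]
      have h1 : |x| ^ (-3/4 : ℝ) ≤ 1 :=
        Real.rpow_le_one_of_one_le_of_nonpos (le_of_not_ge h) (by norm_num)
      have h2 : rexp (-(1/2) * |x| ^ 2) = rexp (-(1/2) * x ^ 2) := by rw [sq_abs]
      rw [h2]
      have hinv : (Real.sqrt (2 * π))⁻¹ ≤ 1 := by
        rw [inv_le_one_iff₀]; right; exact one_le_sqrt_two_pi
      have hinv0 : (0:ℝ) ≤ (Real.sqrt (2 * π))⁻¹ := by positivity
      have hb0 : (0:ℝ) ≤ |x| ^ (-3/4 : ℝ) := Real.rpow_nonneg (abs_nonneg x) _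
      nlinarith [mul_nonneg (sub_nonneg.mpr (mul_le_one₀ hinv hb0 h1))
        (Real.exp_pos (-(1/2) * x ^ 2)).le]
  calc ∫⁻ x, gaussianPDF 0 1 x * ENNReal.ofReal (|x| ^ (-3/4 : ℝ))
      ≤ ∫⁻ x, ENNReal.ofReal (ff |x|) := lintegral_mono hpt
    _ = ENNReal.ofReal (∫ x, ff |x|) := by
        rw [← ofReal_integral_eq_lintegral_ofReal integrable_ff_abs
          (Eventually.of_forall fun x => ff_nonneg (abs_nonneg x))]
    _ ≤ ENNReal.ofReal 11 := by
        apply ENNReal.ofReal_le_ofReal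
        rw [integral_comp_abs (f := ff)]
        linarith [integral_ff_Ioi]

lemma abs_log_le_aux {u : ℝ} (hu : 0 < u) : |Real.log u| ≤ u + u⁻¹ := by
  rcases le_total 1 u with h | h
  · rw [abs_of_nonneg (Real.log_nonneg h)]
    have := Real.log_le_sub_one_of_pos hu
    have : (0:ℝ) < u⁻¹ := by positivity
    linarith [Real.log_le_sub_one_of_pos hu]
  · rw [abs_of_nonpos (Real.log_nonpos hu.le h)]
    have h2 : Real.log u⁻¹ ≤ u⁻¹ - 1 := Real.log_le_sub_one_of_pos (by positivity)
    rw [Real.log_inv] at h2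
    linarith

lemma abs_log_rpow_le {w p : ℝ} (hw : 0 < w) (hp : 1 ≤ p) :
    |Real.log w| ^ p ≤ (8 * p) ^ p * (w ^ (1/4 : ℝ) + w ^ (-(1/4) : ℝ)) := by
  have hp0 : 0 < p := lt_of_lt_of_le one_pos hp
  set ε : ℝ := 1 / (4 * p) with hε_def
  have hε : 0 < ε := by positivity
  set u : ℝ := w ^ ε with hu_def
  have hu : 0 < u := Real.rpow_pos_of_pos hw ε
  have hlogu : Real.log u = ε * Real.log w := Real.log_rpow hw ε
  have h1 : |Real.log w| ≤ (4 * p) * (u + u⁻¹) := by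
    have h2 := abs_log_le_aux hu
    have h3 : |Real.log u| = ε * |Real.log w| := by
      rw [hlogu, abs_mul, abs_of_pos hε]
    have h4 : ε * |Real.log w| ≤ u + u⁻¹ := h3 ▸ h2
    have h5 : (4 * p) * ε = 1 := by rw [hε_def]; field_simp
    calc |Real.log w| = (4 * p) * (ε * |Real.log w|) := by
          rw [← mul_assoc, h5, one_mul]
      _ ≤ (4 * p) * (u + u⁻¹) := by
          apply mul_le_mul_of_nonneg_left h4 (by positivity)
  have h6 : |Real.log w| ^ p ≤ ((4 * p) * (u + u⁻¹)) ^ p :=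
    Real.rpow_le_rpow (abs_nonneg _) h1 hp0.le
  have h7 : ((4 * p) * (u + u⁻¹)) ^ p = (4 * p) ^ p * (u + u⁻¹) ^ p :=
    Real.mul_rpow (by positivity) (by positivity)
  have h8 : (u + u⁻¹) ^ p ≤ (2 : ℝ) ^ p * (u ^ p + (u⁻¹) ^ p) := by
    have hmax : u + u⁻¹ ≤ 2 * max u u⁻¹ := by
      rcases le_total u u⁻¹ with h | h
      · rw [max_eq_right h]; linarith
      · rw [max_eq_left h]; linarith
    calc (u + u⁻¹) ^ p ≤ (2 * max u u⁻¹) ^ p :=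
          Real.rpow_le_rpow (by positivity) hmax hp0.le
      _ = 2 ^ p * (max u u⁻¹) ^ p := Real.mul_rpow (by norm_num)
          (le_max_of_le_left hu.le)
      _ ≤ 2 ^ p * (u ^ p + (u⁻¹) ^ p) := by
          apply mul_le_mul_of_nonneg_left _ (by positivity)
          rcases max_cases u u⁻¹ with ⟨hm, _⟩ | ⟨hm, _⟩ <;> rw [hm]
          · nlinarith [Real.rpow_nonneg (by positivity : (0:ℝ) ≤ u⁻¹) p]
          · nlinarith [Real.rpow_nonneg hu.le p]
  have hup : u ^ p = w ^ (1/4 : ℝ) := by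
    rw [hu_def, ← Real.rpow_mul hw.le]
    congr 1
    rw [hε_def]; field_simp
  have hunp : (u⁻¹) ^ p = w ^ (-(1/4) : ℝ) := by
    rw [hu_def, ← Real.rpow_neg hw.le, ← Real.rpow_mul hw.le]
    congr 1
    rw [hε_def]; field_simp
  have h9 : (4 * p : ℝ) ^ p * (2:ℝ) ^ p = (8 * p) ^ p := by
    rw [← Real.mul_rpow (by positivity) (by norm_num)]
    congr 1; ring
  calc |Real.log w| ^ p ≤ (4 * p) ^ p * (u + u⁻¹) ^ p := by rw [← h7]; exact h6
    _ ≤ (4 * p) ^ p * ((2:ℝ) ^ p * (u ^ p + (u⁻¹) ^ p)) :=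
        mul_le_mul_of_nonneg_left h8 (by positivity)
    _ = (8 * p) ^ p * (u ^ p + (u⁻¹) ^ p) := by rw [← mul_assoc, h9]
    _ = (8 * p) ^ p * (w ^ (1/4 : ℝ) + w ^ (-(1/4) : ℝ)) := by rw [hup, hunp]

lemma rpow_quarter_le {w : ℝ} (hw : 0 ≤ w) : w ^ (1/4 : ℝ) ≤ 1 + w := by
  rcases le_total w 1 with h | h
  · have := Real.rpow_le_one hw h (by norm_num : (0:ℝ) ≤ 1/4)
    linarith
  · have h2 : w ^ (1/4 : ℝ) ≤ w ^ (1 : ℝ) :=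
      Real.rpow_le_rpow_of_exponent_le h (by norm_num)
    rw [Real.rpow_one] at h2
    linarith

lemma two_rpow_quarter_le : (1/2 : ℝ) ^ (-(1/4) : ℝ) ≤ 2 := by
  rw [show (1/2:ℝ) = 2⁻¹ by norm_num, ← Real.rpow_neg_one 2,
    ← Real.rpow_mul (by norm_num : (0:ℝ) ≤ 2)]
  calc (2:ℝ) ^ ((-1) * -(1/4) : ℝ) ≤ (2:ℝ) ^ (1:ℝ) :=
        Real.rpow_le_rpow_of_exponent_le one_le_two (by norm_num)
    _ = 2 := Real.rpow_one 2

lemma sq_abs_rpow {z : ℝ} : (z ^ 2 : ℝ) ^ (-(1/4) : ℝ) = |z| ^ (-(1/2) : ℝ) := by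
  rw [← sq_abs, ← Real.rpow_natCast |z| 2, ← Real.rpow_mul (abs_nonneg z)]
  norm_num

lemma neg_quarter_le {w z m2 : ℝ} (hm : 0 < m2) (hz : z ≠ 0) (hw : m2 * z ^ 2 ≤ w) :
    w ^ (-(1/4) : ℝ) ≤ 2 + 2 * ((m2 ^ (-(1/4) : ℝ) * |z| ^ (-(1/2) : ℝ)) * max (1 - w) 0) := by
  have hz2 : 0 < z ^ 2 := by positivity
  have hwpos : 0 < w := lt_of_lt_of_le (by positivity) hw
  have hK : 0 ≤ m2 ^ (-(1/4) : ℝ) * |z| ^ (-(1/2) : ℝ) :=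
    mul_nonneg (Real.rpow_nonneg hm.le _) (Real.rpow_nonneg (abs_nonneg z) _)
  rcases le_total (1/2 : ℝ) w with h | h
  · have h1 : w ^ (-(1/4) : ℝ) ≤ (1/2 : ℝ) ^ (-(1/4) : ℝ) :=
      Real.rpow_le_rpow_of_nonpos (by norm_num) h (by norm_num)
    have h2 := two_rpow_quarter_le
    have h3 : 0 ≤ max (1 - w) 0 := le_max_right _ _
    nlinarith [mul_nonneg hK h3]
  · have hmax : max (1 - w) 0 = 1 - w := max_eq_left (by linarith)
    have hlow : w ^ (-(1/4) : ℝ) ≤ m2 ^ (-(1/4) : ℝ) * |z| ^ (-(1/2) : ℝ) := by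
      calc w ^ (-(1/4) : ℝ) ≤ (m2 * z ^ 2) ^ (-(1/4) : ℝ) :=
            Real.rpow_le_rpow_of_nonpos (by positivity) hw (by norm_num)
        _ = m2 ^ (-(1/4) : ℝ) * (z ^ 2) ^ (-(1/4) : ℝ) :=
            Real.mul_rpow hm.le hz2.le
        _ = m2 ^ (-(1/4) : ℝ) * |z| ^ (-(1/2) : ℝ) := by rw [sq_abs_rpow]
    have h4 : (1:ℝ) ≤ 2 * (1 - w) := by linarith
    have h5 : 0 ≤ w ^ (-(1/4) : ℝ) := Real.rpow_nonneg hwpos.le _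
    rw [hmax]
    nlinarith [mul_le_mul_of_nonneg_left h4 h5]

lemma cube_max_le {w : ℝ} (hw : 0 ≤ w) : (max (1 - w) 0) ^ (3 : ℝ) ≤ (w - 1) ^ 2 := by
  rw [show (3:ℝ) = ((3:ℕ):ℝ) by norm_num, Real.rpow_natCast]
  rcases max_cases (1 - w) 0 with ⟨hm, hge⟩ | ⟨hm, _⟩ <;> rw [hm]
  · nlinarith
  · nlinarith

lemma m_rpow_bound {m2 : ℝ} (h0 : 0 < m2) (h1 : m2 ≤ 1) :
    m2 ^ (-(1/4) : ℝ) * (2 * m2) ^ ((1:ℝ)/3) ≤ 2 := by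
  have e1 : (2 * m2 : ℝ) ^ ((1:ℝ)/3) = 2 ^ ((1:ℝ)/3) * m2 ^ ((1:ℝ)/3) :=
    Real.mul_rpow (by norm_num) h0.le
  have e2 : m2 ^ (-(1/4) : ℝ) * m2 ^ ((1:ℝ)/3) = m2 ^ ((1:ℝ)/12) := by
    rw [← Real.rpow_add h0]
    norm_num
  have h3 : m2 ^ ((1:ℝ)/12) ≤ 1 := Real.rpow_le_one h0.le h1 (by norm_num)
  have h4 : (2:ℝ) ^ ((1:ℝ)/3) ≤ 2 := by
    calc (2:ℝ) ^ ((1:ℝ)/3) ≤ (2:ℝ) ^ (1:ℝ) :=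
          Real.rpow_le_rpow_of_exponent_le one_le_two (by norm_num)
      _ = 2 := Real.rpow_one 2
  have h5 : 0 ≤ (2:ℝ) ^ ((1:ℝ)/3) := by positivity
  calc m2 ^ (-(1/4) : ℝ) * (2 * m2) ^ ((1:ℝ)/3)
      = 2 ^ ((1:ℝ)/3) * (m2 ^ (-(1/4) : ℝ) * m2 ^ ((1:ℝ)/3)) := by rw [e1]; ring
    _ = 2 ^ ((1:ℝ)/3) * m2 ^ ((1:ℝ)/12) := by rw [e2]
    _ ≤ 2 * 1 := by
        apply mul_le_mul h4 h3 (Real.rpow_nonneg h0.le _) (by norm_num)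
    _ = 2 := by norm_num

/-- Uniformly bounded moments of `|log ϖ|` for unit-mean weighted chi-squared
sums `ϖ = ∑ η_j Z_j²`: for each `p ≥ 1` (and each upper bound `B` on the
variance `2 ∑ η_j²`) there is `K_p`, not depending on `N` nor on the weights,
with `E[|log ϖ|^p] ≤ K_p`. -/
theorem stmt_10 (p : ℝ) (hp : 1 ≤ p) (B : ℝ) :
    ∃ K : ℝ,
      ∀ (N : ℕ) (Ω : Type) (_ : MeasurableSpace Ω) (P : Measure Ω)
        (_ : IsProbabilityMeasure P) (Z : Fin N → Ω → ℝ) (η : Fin N → ℝ),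
        iIndepFun Z P →
        (∀ i, Measure.map (Z i) P = gaussianReal 0 1) →
        (∀ i, 0 ≤ η i) → η ≠ 0 → (∑ i, η i) = 1 →
        2 * (∑ i, η i ^ 2) ≤ B →
        ∫ ω, |Real.log (∑ i, η i * Z i ω ^ 2)| ^ p ∂P ≤ K := by
  refine ⟨48 * (8 * p) ^ p, ?_⟩
  intro N Ω mΩ P hPprob Z η hind hmap hηnn hηne hηsum hB
  have hp0 : 0 < p := lt_of_lt_of_le one_pos hp
  have hK0 : (0:ℝ) ≤ 48 * (8 * p) ^ p := by positivity
  -- measurability of the Z i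
  have hZae : ∀ i, AEMeasurable (Z i) P := by
    intro i
    by_contra h
    have h0 := Measure.map_of_not_aemeasurable h
    rw [hmap i] at h0
    have h1 := measure_univ (μ := gaussianReal 0 1)
    rw [h0] at h1
    simp at h1
  set W : Ω → ℝ := fun ω => ∑ i, η i * Z i ω ^ 2 with hWdef
  have hWae : AEMeasurable W P :=
    Finset.aemeasurable_fun_sum _ fun i _ => ((hZae i).pow_const 2).const_mul _
  have hWnn : ∀ ω, 0 ≤ W ω :=
    fun ω => Finset.sum_nonneg fun i _ => mul_nonneg (hηnn i) (sq_nonneg _)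
  -- the index with the largest weight
  have hN : N ≠ 0 := by
    rintro rfl
    exact hηne (funext fun i => i.elim0)
  haveI : Nonempty (Fin N) := ⟨⟨0, Nat.pos_of_ne_zero hN⟩⟩
  obtain ⟨j, hj⟩ := Finite.exists_max η
  set m : ℝ := ∑ i, η i ^ 2 with hmdef
  have hm_pos : 0 < m := by
    obtain ⟨i₀, hi₀⟩ := Function.ne_iff.mp hηne
    exact Finset.sum_pos' (fun i _ => sq_nonneg _)
      ⟨i₀, Finset.mem_univ i₀, by
        have h := lt_of_le_of_ne (hηnn i₀) (Ne.symm hi₀)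
        positivity⟩
  have hηj : m ≤ η j := by
    calc m = ∑ i, η i ^ 2 := hmdef
      _ ≤ ∑ i, η i * η j := by
          apply Finset.sum_le_sum
          intro i _
          have := hj i
          nlinarith [hηnn i]
      _ = (∑ i, η i) * η j := by rw [Finset.sum_mul]
      _ = η j := by rw [hηsum, one_mul]
  have hηj1 : η j ≤ 1 := by
    have := Finset.single_le_sum (fun i _ => hηnn i) (Finset.mem_univ j)
    rwa [hηsum] at this
  have hm1 : m ≤ 1 := hηj.trans hηj1
  have hlower : ∀ ω, m * Z j ω ^ 2 ≤ W ω := by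
    intro ω
    calc m * Z j ω ^ 2 ≤ η j * Z j ω ^ 2 :=
          mul_le_mul_of_nonneg_right hηj (sq_nonneg _)
      _ ≤ W ω := Finset.single_le_sum (f := fun i => η i * Z i ω ^ 2)
          (fun i _ => mul_nonneg (hηnn i) (sq_nonneg _)) (Finset.mem_univ j)
  -- a.e. nonvanishing of Z j
  have hzj : ∀ᵐ ω ∂P, Z j ω ≠ 0 := by
    have h0 : P (Z j ⁻¹' {0}) = 0 := by
      have h1 : Measure.map (Z j) P {(0:ℝ)} = 0 := by
        rw [hmap j]; exact G_singleton_zero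
      rwa [Measure.map_apply_of_aemeasurable (hZae j) (measurableSet_singleton 0)] at h1
    rw [ae_iff]
    simpa [Set.preimage, not_not] using h0
  have hWpos : ∀ᵐ ω ∂P, 0 < W ω := by
    filter_upwards [hzj] with ω hz
    exact lt_of_lt_of_le (by positivity) (hlower ω)
  -- moments of Z i ^ 2
  have hMemi : ∀ i, MemLp (fun ω => Z i ω ^ 2) 2 P := by
    intro i
    have h1 : MemLp (fun x : ℝ => x ^ 2) 2 (Measure.map (Z i) P) := by
      rw [hmap i]; exact G_memLp_sq
    have h2 : AEStronglyMeasurable (fun x : ℝ => x ^ 2) (Measure.map (Z i) P) :=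
      (measurable_id.pow_const 2).aestronglyMeasurable
    exact (memLp_map_measure_iff h2 (hZae i)).mp h1
  have hEi : ∀ i, ∫ ω, Z i ω ^ 2 ∂P = 1 := by
    intro i
    have hg : AEStronglyMeasurable (fun x : ℝ => x ^ 2) (Measure.map (Z i) P) :=
      (measurable_id.pow_const 2).aestronglyMeasurable
    have e := integral_map (hZae i) hg
    rw [hmap i] at e
    rw [← e]
    exact G_integral_sq
  have hE4i : ∀ i, ∫ ω, (Z i ω ^ 2) ^ 2 ∂P = 3 := by
    intro i
    have hg : AEStronglyMeasurable (fun x : ℝ => (x ^ 2) ^ 2) (Measure.map (Z i) P) :=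
      ((measurable_id.pow_const 2).pow_const 2).aestronglyMeasurable
    have e := integral_map (hZae i) hg
    rw [hmap i] at e
    rw [← e]
    have h4 : (fun x : ℝ => (x ^ 2) ^ 2) = fun x : ℝ => x ^ 4 := by
      funext x; ring
    rw [h4]
    exact G_integral_q
  have hvar_i : ∀ i, variance (fun ω => Z i ω ^ 2) P = 2 := by
    intro i
    rw [variance_eq_sub (hMemi i)]
    simp only [Pi.pow_apply]
    rw [hE4i i, hEi i]
    norm_num
  have hMemW : MemLp W 2 P :=
    memLp_finset_sum _ fun i _ => (hMemi i).const_mul (η i)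
  have hEW : ∫ ω, W ω ∂P = 1 := by
    calc ∫ ω, W ω ∂P = ∑ i, ∫ ω, η i * Z i ω ^ 2 ∂P :=
          integral_finset_sum _ fun i _ =>
            (((hMemi i).integrable one_le_two).const_mul (η i))
      _ = ∑ i, η i * ∫ ω, Z i ω ^ 2 ∂P := by
          refine Finset.sum_congr rfl fun i _ => ?_
          exact integral_const_mul (η i) _
      _ = ∑ i, η i := by
          refine Finset.sum_congr rfl fun i _ => ?_
          rw [hEi i, mul_one]
      _ = 1 := hηsum
  have hpair : Set.Pairwise ↑(Finset.univ : Finset (Fin N))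
      (fun a b => IndepFun (fun ω => η a * Z a ω ^ 2) (fun ω => η b * Z b ω ^ 2) P) := by
    intro a _ b _ hab
    have h0 : IndepFun (Z a) (Z b) P := hind.indepFun hab
    exact h0.comp ((measurable_id.pow_const 2).const_mul (η a))
      ((measurable_id.pow_const 2).const_mul (η b))
  have hvarW : variance W P = 2 * m := by
    have hWe : W = ∑ i : Fin N, (fun ω => η i * Z i ω ^ 2) := by
      funext ω; rw [Finset.sum_apply]
    rw [hWe, IndepFun.variance_sum (fun i _ => (hMemi i).const_mul (η i)) hpair]
    calc ∑ i, variance (fun ω => η i * Z i ω ^ 2) P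
        = ∑ i, η i ^ 2 * 2 := by
          refine Finset.sum_congr rfl fun i _ => ?_
          rw [variance_const_mul (η i) (fun ω => Z i ω ^ 2), hvar_i i]
      _ = 2 * m := by rw [hmdef, ← Finset.sum_mul]; ring
  have hIntW : Integrable W P := hMemW.integrable one_le_two
  have hIntW2 : Integrable (fun ω => W ω ^ 2) P := hMemW.integrable_sq
  have hEW2 : ∫ ω, W ω ^ 2 ∂P = 2 * m + 1 := by
    have hv := variance_eq_sub hMemW
    rw [hvarW] at hv
    simp only [Pi.pow_apply] at hv
    rw [hEW] at hv
    nlinarith [hv]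
  have hIntDev : Integrable (fun ω => (W ω - 1) ^ 2) P := by
    have he : (fun ω => (W ω - 1) ^ 2) = fun ω => W ω ^ 2 - 2 * W ω + 1 :=
      funext fun ω => by ring
    rw [he]
    exact (hIntW2.sub (hIntW.const_mul 2)).add (integrable_const 1)
  have hvar_sq : ∫ ω, (W ω - 1) ^ 2 ∂P = 2 * m := by
    have he : (fun ω => (W ω - 1) ^ 2) = fun ω => W ω ^ 2 - 2 * W ω + 1 :=
      funext fun ω => by ring
    have h1 : ∫ ω, (W ω ^ 2 - 2 * W ω) + 1 ∂P
        = (∫ ω, W ω ^ 2 - 2 * W ω ∂P) + ∫ _ω, (1:ℝ) ∂P :=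
      integral_add (hIntW2.sub (hIntW.const_mul 2)) (integrable_const 1)
    have h2 : ∫ ω, W ω ^ 2 - 2 * W ω ∂P = (∫ ω, W ω ^ 2 ∂P) - ∫ ω, 2 * W ω ∂P :=
      integral_sub hIntW2 (hIntW.const_mul 2)
    have h3 : ∫ ω, 2 * W ω ∂P = 2 * ∫ ω, W ω ∂P := integral_const_mul 2 _
    have h4 : ∫ _ω, (1:ℝ) ∂P = 1 := by simp
    have h5 : (fun ω => W ω ^ 2 - 2 * W ω + 1) = fun ω => (W ω ^ 2 - 2 * W ω) + 1 := rfl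
    rw [he, h5, h1, h2, h3, hEW, hEW2, h4]
    ring
  -- ENNReal-level measurability
  have hWrp : ∀ c : ℝ, AEMeasurable (fun ω => ENNReal.ofReal (W ω ^ c)) P := by
    intro c
    refine (((meas_abs_rpow c).ennreal_ofReal).comp_aemeasurable hWae).congr ?_
    refine Eventually.of_forall fun ω => ?_
    simp only [Function.comp_apply]
    rw [abs_of_nonneg (hWnn ω)]
  have hZsq : ∀ i, ∫⁻ ω, ENNReal.ofReal (Z i ω ^ 2) ∂P = 1 := by
    intro i
    have hmeas : Measurable (fun x : ℝ => ENNReal.ofReal (x ^ 2)) :=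
      (measurable_id.pow_const 2).ennreal_ofReal
    have e := lintegral_map' (hmeas.aemeasurable) (hZae i)
    rw [hmap i] at e
    rw [← e]
    exact G_lintegral_sq
  have key2 : ∫⁻ ω, ENNReal.ofReal (W ω ^ (1/4 : ℝ)) ∂P ≤ 2 := by
    have hWint : ∫⁻ ω, ENNReal.ofReal (W ω) ∂P = 1 := by
      have hpt : ∀ ω, ENNReal.ofReal (W ω)
          = ∑ i, ENNReal.ofReal (η i) * ENNReal.ofReal (Z i ω ^ 2) := by
        intro ω
        calc ENNReal.ofReal (W ω) = ∑ i, ENNReal.ofReal (η i * Z i ω ^ 2) :=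
              ENNReal.ofReal_sum_of_nonneg (fun i _ => mul_nonneg (hηnn i) (sq_nonneg _))
          _ = ∑ i, ENNReal.ofReal (η i) * ENNReal.ofReal (Z i ω ^ 2) :=
              Finset.sum_congr rfl fun i _ => ENNReal.ofReal_mul (hηnn i)
      calc ∫⁻ ω, ENNReal.ofReal (W ω) ∂P
          = ∫⁻ ω, ∑ i, ENNReal.ofReal (η i) * ENNReal.ofReal (Z i ω ^ 2) ∂P :=
            lintegral_congr hpt
        _ = ∑ i, ∫⁻ ω, ENNReal.ofReal (η i) * ENNReal.ofReal (Z i ω ^ 2) ∂P :=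
            lintegral_finset_sum' _ fun i _ =>
              (((measurable_id.pow_const 2).ennreal_ofReal.comp_aemeasurable (hZae i)).const_mul _)
        _ = ∑ i, ENNReal.ofReal (η i) * ∫⁻ ω, ENNReal.ofReal (Z i ω ^ 2) ∂P :=
            Finset.sum_congr rfl fun i _ => lintegral_const_mul'' _
              ((measurable_id.pow_const 2).ennreal_ofReal.comp_aemeasurable (hZae i))
        _ = ∑ i, ENNReal.ofReal (η i) := by
            refine Finset.sum_congr rfl fun i _ => ?_
            rw [hZsq i, mul_one]
        _ = 1 := by
            rw [← ENNReal.ofReal_sum_of_nonneg (fun i _ => hηnn i), hηsum, ENNReal.ofReal_one]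
    calc ∫⁻ ω, ENNReal.ofReal (W ω ^ (1/4:ℝ)) ∂P
        ≤ ∫⁻ ω, ENNReal.ofReal (1 + W ω) ∂P :=
          lintegral_mono fun ω => ENNReal.ofReal_le_ofReal (rpow_quarter_le (hWnn ω))
      _ = ∫⁻ ω, (1 + ENNReal.ofReal (W ω)) ∂P := lintegral_congr fun ω => by
          rw [ENNReal.ofReal_add zero_le_one (hWnn ω), ENNReal.ofReal_one]
      _ = ∫⁻ _ω, (1:ℝ≥0∞) ∂P + ∫⁻ ω, ENNReal.ofReal (W ω) ∂P :=
          lintegral_add_left measurable_const _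
      _ = 1 + 1 := by rw [hWint, lintegral_one, measure_univ]
      _ = 2 := by norm_num
  -- small-values part
  have hK1ae : AEMeasurable (fun ω => ENNReal.ofReal (|Z j ω| ^ (-(1/2):ℝ))) P :=
    ((meas_abs_rpow _).ennreal_ofReal).comp_aemeasurable (hZae j)
  have hPhiae : AEMeasurable (fun ω => ENNReal.ofReal (max (1 - W ω) 0)) P :=
    (((measurable_const.sub measurable_id).max measurable_const).ennreal_ofReal).comp_aemeasurable hWae
  have hHolder := ENNReal.lintegral_mul_le_Lp_mul_Lq P (p := 3/2) (q := 3)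
    ⟨by norm_num, by norm_num, by norm_num⟩ hK1ae hPhiae
  simp only [Pi.mul_apply] at hHolder
  have hA : ∫⁻ ω, ENNReal.ofReal (|Z j ω| ^ (-(1/2):ℝ)) ^ (3/2 : ℝ) ∂P ≤ ENNReal.ofReal 11 := by
    have hpt : ∀ ω, ENNReal.ofReal (|Z j ω| ^ (-(1/2):ℝ)) ^ (3/2 : ℝ)
        = ENNReal.ofReal (|Z j ω| ^ (-3/4 : ℝ)) := by
      intro ω
      rw [ENNReal.ofReal_rpow_of_nonneg (Real.rpow_nonneg (abs_nonneg _) _)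
        (by norm_num : (0:ℝ) ≤ 3/2)]
      congr 1
      rw [← Real.rpow_mul (abs_nonneg _)]
      norm_num
    rw [lintegral_congr hpt]
    have hmeas : Measurable (fun x : ℝ => ENNReal.ofReal (|x| ^ (-3/4:ℝ))) :=
      (meas_abs_rpow _).ennreal_ofReal
    have e := lintegral_map' hmeas.aemeasurable (hZae j)
    rw [hmap j] at e
    rw [← e]
    exact G_lintegral_abs_rpow
  have hBB : ∫⁻ ω, ENNReal.ofReal (max (1 - W ω) 0) ^ (3:ℝ) ∂P ≤ ENNReal.ofReal (2 * m) := by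
    have hpt : ∀ ω, ENNReal.ofReal (max (1 - W ω) 0) ^ (3:ℝ)
        ≤ ENNReal.ofReal ((W ω - 1) ^ 2) := by
      intro ω
      rw [ENNReal.ofReal_rpow_of_nonneg (le_max_right _ _) (by norm_num : (0:ℝ) ≤ 3)]
      exact ENNReal.ofReal_le_ofReal (cube_max_le (hWnn ω))
    calc ∫⁻ ω, ENNReal.ofReal (max (1 - W ω) 0) ^ (3:ℝ) ∂P
        ≤ ∫⁻ ω, ENNReal.ofReal ((W ω - 1) ^ 2) ∂P := lintegral_mono hpt
      _ = ENNReal.ofReal (∫ ω, (W ω - 1) ^ 2 ∂P) :=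
          (ofReal_integral_eq_lintegral_ofReal hIntDev
            (Eventually.of_forall fun ω => sq_nonneg _)).symm
      _ = ENNReal.ofReal (2 * m) := by rw [hvar_sq]
  have key3 : ∫⁻ ω, ENNReal.ofReal (W ω ^ (-(1/4):ℝ)) ∂P ≤ ENNReal.ofReal 46 := by
    have hptae : ∀ᵐ ω ∂P, ENNReal.ofReal (W ω ^ (-(1/4):ℝ))
        ≤ ENNReal.ofReal 2 + (ENNReal.ofReal 2 * ENNReal.ofReal (m ^ (-(1/4):ℝ)))
            * (ENNReal.ofReal (|Z j ω| ^ (-(1/2):ℝ)) * ENNReal.ofReal (max (1 - W ω) 0)) := by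
      filter_upwards [hzj] with ω hz
      have h0 := neg_quarter_le hm_pos hz (hlower ω)
      have ha : (0:ℝ) ≤ m ^ (-(1/4):ℝ) := Real.rpow_nonneg hm_pos.le _
      have hb : (0:ℝ) ≤ |Z j ω| ^ (-(1/2):ℝ) := Real.rpow_nonneg (abs_nonneg _) _
      have hc : (0:ℝ) ≤ max (1 - W ω) 0 := le_max_right _ _
      calc ENNReal.ofReal (W ω ^ (-(1/4):ℝ))
          ≤ ENNReal.ofReal (2 + 2 * ((m ^ (-(1/4):ℝ) * |Z j ω| ^ (-(1/2):ℝ)) * max (1 - W ω) 0)) :=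
            ENNReal.ofReal_le_ofReal h0
        _ = ENNReal.ofReal 2 + (ENNReal.ofReal 2 * ENNReal.ofReal (m ^ (-(1/4):ℝ)))
              * (ENNReal.ofReal (|Z j ω| ^ (-(1/2):ℝ)) * ENNReal.ofReal (max (1 - W ω) 0)) := by
            rw [ENNReal.ofReal_add (by norm_num)
              (by positivity : (0:ℝ) ≤ 2 * ((m ^ (-(1/4):ℝ) * |Z j ω| ^ (-(1/2):ℝ)) * max (1 - W ω) 0)),
              ENNReal.ofReal_mul (by norm_num : (0:ℝ) ≤ 2),
              ENNReal.ofReal_mul (mul_nonneg ha hb), ENNReal.ofReal_mul ha]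
            ring
    calc ∫⁻ ω, ENNReal.ofReal (W ω ^ (-(1/4):ℝ)) ∂P
        ≤ ∫⁻ ω, (ENNReal.ofReal 2 + (ENNReal.ofReal 2 * ENNReal.ofReal (m ^ (-(1/4):ℝ)))
            * (ENNReal.ofReal (|Z j ω| ^ (-(1/2):ℝ)) * ENNReal.ofReal (max (1 - W ω) 0))) ∂P :=
          lintegral_mono_ae hptae
      _ = ENNReal.ofReal 2 + (ENNReal.ofReal 2 * ENNReal.ofReal (m ^ (-(1/4):ℝ)))
            * ∫⁻ ω, ENNReal.ofReal (|Z j ω| ^ (-(1/2):ℝ)) * ENNReal.ofReal (max (1 - W ω) 0) ∂P := by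
          rw [lintegral_add_left measurable_const, lintegral_const, measure_univ, mul_one,
            lintegral_const_mul'' (f := fun ω => ENNReal.ofReal (|Z j ω| ^ (-(1/2):ℝ)) * ENNReal.ofReal (max (1 - W ω) 0)) _ (hK1ae.mul hPhiae)]
      _ ≤ ENNReal.ofReal 2 + (ENNReal.ofReal 2 * ENNReal.ofReal (m ^ (-(1/4):ℝ)))
            * ((∫⁻ ω, ENNReal.ofReal (|Z j ω| ^ (-(1/2):ℝ)) ^ (3/2:ℝ) ∂P) ^ (1/(3/2:ℝ))
              * (∫⁻ ω, ENNReal.ofReal (max (1 - W ω) 0) ^ (3:ℝ) ∂P) ^ (1/(3:ℝ))) :=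
          add_le_add_right (mul_le_mul_right hHolder _) _
      _ ≤ ENNReal.ofReal 2 + (ENNReal.ofReal 2 * ENNReal.ofReal (m ^ (-(1/4):ℝ)))
            * (ENNReal.ofReal 11 * ENNReal.ofReal ((2*m) ^ ((1:ℝ)/3))) := by
          refine add_le_add_right (mul_le_mul_right (mul_le_mul' ?_ ?_) _) _
          · calc (∫⁻ ω, ENNReal.ofReal (|Z j ω| ^ (-(1/2):ℝ)) ^ (3/2:ℝ) ∂P) ^ (1/(3/2:ℝ))
                ≤ (ENNReal.ofReal 11) ^ (1/(3/2:ℝ)) := ENNReal.rpow_le_rpow hA (by norm_num)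
              _ ≤ (ENNReal.ofReal 11) ^ (1:ℝ) := ENNReal.rpow_le_rpow_of_exponent_le
                  (ENNReal.one_le_ofReal.mpr (by norm_num)) (by norm_num)
              _ = ENNReal.ofReal 11 := ENNReal.rpow_one _
          · calc (∫⁻ ω, ENNReal.ofReal (max (1 - W ω) 0) ^ (3:ℝ) ∂P) ^ (1/(3:ℝ))
                ≤ (ENNReal.ofReal (2*m)) ^ (1/(3:ℝ)) := ENNReal.rpow_le_rpow hBB (by norm_num)
              _ = ENNReal.ofReal ((2*m) ^ ((1:ℝ)/3)) :=
                  ENNReal.ofReal_rpow_of_nonneg (by positivity) (by norm_num)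
      _ ≤ ENNReal.ofReal 46 := by
          have h1 : ENNReal.ofReal (m ^ (-(1/4):ℝ)) * ENNReal.ofReal ((2*m) ^ ((1:ℝ)/3))
              ≤ ENNReal.ofReal 2 := by
            rw [← ENNReal.ofReal_mul (Real.rpow_nonneg hm_pos.le _)]
            exact ENNReal.ofReal_le_ofReal (m_rpow_bound hm_pos hm1)
          calc ENNReal.ofReal 2 + (ENNReal.ofReal 2 * ENNReal.ofReal (m ^ (-(1/4):ℝ)))
                * (ENNReal.ofReal 11 * ENNReal.ofReal ((2*m) ^ ((1:ℝ)/3)))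
              = ENNReal.ofReal 2 + ENNReal.ofReal 2 * ENNReal.ofReal 11
                * (ENNReal.ofReal (m ^ (-(1/4):ℝ)) * ENNReal.ofReal ((2*m) ^ ((1:ℝ)/3))) := by
                ring
            _ ≤ ENNReal.ofReal 2 + ENNReal.ofReal 2 * ENNReal.ofReal 11 * ENNReal.ofReal 2 :=
                add_le_add_right (mul_le_mul_right h1 _) _
            _ = ENNReal.ofReal 46 := by
                rw [← ENNReal.ofReal_mul (by norm_num : (0:ℝ) ≤ 2),
                  ← ENNReal.ofReal_mul (by norm_num : (0:ℝ) ≤ 2*11),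
                  ← ENNReal.ofReal_add (by norm_num) (by norm_num)]
                norm_num
  -- final assembly
  have key1 : ∀ᵐ ω ∂P, ENNReal.ofReal (|Real.log (W ω)| ^ p)
      ≤ ENNReal.ofReal ((8*p)^p)
        * (ENNReal.ofReal (W ω ^ (1/4:ℝ)) + ENNReal.ofReal (W ω ^ (-(1/4):ℝ))) := by
    filter_upwards [hWpos] with ω hpos
    calc ENNReal.ofReal (|Real.log (W ω)| ^ p)
        ≤ ENNReal.ofReal ((8*p)^p * (W ω ^ (1/4:ℝ) + W ω ^ (-(1/4):ℝ))) :=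
          ENNReal.ofReal_le_ofReal (abs_log_rpow_le hpos hp)
      _ = _ := by
          rw [ENNReal.ofReal_mul (by positivity),
            ENNReal.ofReal_add (Real.rpow_nonneg (hWnn ω) _) (Real.rpow_nonneg (hWnn ω) _)]
  have key : ∫⁻ ω, ENNReal.ofReal (|Real.log (W ω)| ^ p) ∂P
      ≤ ENNReal.ofReal (48 * (8*p)^p) := by
    calc ∫⁻ ω, ENNReal.ofReal (|Real.log (W ω)| ^ p) ∂P
        ≤ ∫⁻ ω, ENNReal.ofReal ((8*p)^p)
            * (ENNReal.ofReal (W ω ^ (1/4:ℝ)) + ENNReal.ofReal (W ω ^ (-(1/4):ℝ))) ∂P :=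
          lintegral_mono_ae key1
      _ = ENNReal.ofReal ((8*p)^p)
            * ∫⁻ ω, (ENNReal.ofReal (W ω ^ (1/4:ℝ)) + ENNReal.ofReal (W ω ^ (-(1/4):ℝ))) ∂P :=
          lintegral_const_mul'' _ ((hWrp _).add (hWrp _))
      _ = ENNReal.ofReal ((8*p)^p)
            * ((∫⁻ ω, ENNReal.ofReal (W ω ^ (1/4:ℝ)) ∂P)
              + ∫⁻ ω, ENNReal.ofReal (W ω ^ (-(1/4):ℝ)) ∂P) := by
          rw [lintegral_add_left' (hWrp _)]
      _ ≤ ENNReal.ofReal ((8*p)^p) * (2 + ENNReal.ofReal 46) :=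
          mul_le_mul_right (add_le_add key2 key3) _
      _ ≤ ENNReal.ofReal (48 * (8*p)^p) := by
          have h2 : (2:ℝ≥0∞) + ENNReal.ofReal 46 = ENNReal.ofReal 48 := by
            rw [show (2:ℝ≥0∞) = ENNReal.ofReal 2 by simp,
              ← ENNReal.ofReal_add (by norm_num) (by norm_num)]
            norm_num
          rw [h2, ← ENNReal.ofReal_mul (by positivity)]
          exact ENNReal.ofReal_le_ofReal (le_of_eq (mul_comm _ _))
  have hfinal : ∫ ω, |Real.log (W ω)| ^ p ∂P
      ≤ (∫⁻ ω, ENNReal.ofReal (|Real.log (W ω)| ^ p) ∂P).toReal := by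
    have h2 := norm_integral_le_lintegral_norm (μ := P) (f := fun ω => |Real.log (W ω)| ^ p)
    have h3 : ∫⁻ ω, ENNReal.ofReal ‖|Real.log (W ω)| ^ p‖ ∂P
        = ∫⁻ ω, ENNReal.ofReal (|Real.log (W ω)| ^ p) ∂P := by
      refine lintegral_congr fun ω => ?_
      rw [Real.norm_eq_abs, abs_of_nonneg (Real.rpow_nonneg (abs_nonneg _) _)]
    rw [h3] at h2
    calc ∫ ω, |Real.log (W ω)| ^ p ∂P ≤ ‖∫ ω, |Real.log (W ω)| ^ p ∂P‖ := by
          rw [Real.norm_eq_abs]; exact le_abs_self _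
      _ ≤ (∫⁻ ω, ENNReal.ofReal (|Real.log (W ω)| ^ p) ∂P).toReal := h2
  exact hfinal.trans (ENNReal.toReal_le_of_le_ofReal hK0 key)
end
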